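/- arXiv:1901.10442 — 4 statements merged into one kernel-verified Lean document; each statement's English description precedes it below -/
import Mathlib

section
/- Topological representation theorem for U-rich EDC-lattices: Let D be an EDC-lattice satisfying (Ext Ô): a ≰ b → ∃c, a + c = 1 and b + c ≠ 1; (U-rich ≪): a ≪ b → ∃c, b + c = 1 and ¬(a C c); and (U-rich Ĉ): ¬(a Ĉ b) → ∃c ∃d, a + c = 1, b + d = 1 and ¬(c C d). Then there exist a topological space X which is compact, T0 and semiregular (every closed subset of X is an intersection of regular closed sets), and a map h : D → (subsets of X) such that: every h(a) is regular closed; h is injective; h(0) = ∅, h(1) = X; h(a+b) = h(a) ∪ h(b); h(a·b) = Cl(Int(h(a) ∩ h(b))); a ≤ b iff h(a) ⊆ h(b); a C b iff h(a) ∩ h(b) ≠ ∅; a Ĉ b iff Int(h(a)) ∪ Int(h(b)) ≠ X; a ≪ b iff h(a) ⊆ Int(h(b)); h is dually dense: for every regular closed α ≠ X there exists a ∈ D with α ⊆ h(a) and h(a) ≠ X; and h is C-separable: (for C) for all regular closed α, β with α ∩ β = ∅ there exist a, b ∈ D with α ⊆ h(a), β ⊆ h(b) and h(a) ∩ h(b)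 = ∅; (for Ĉ) for all regular closed α, β with Cl(X∖α) ∩ Cl(X∖β) = ∅ there exist a, b ∈ D with α ∪ h(a) = X, β ∪ h(b) = X and h(a) ∩ h(b) = ∅; (for ≪) for all regular closed α, β with α ⊆ Int(β) there exist a, b ∈ D with α ⊆ h(a), β ∪ h(b) = X and h(a) ∩ h(b) = ∅. -/
universe u

/-- Extended distributive contact lattice (EDC-lattice): a bounded distributive
lattice with contact `C`, dual contact `Cd` and nontangential part-of `Ll`
satisfying the 23 axioms. -/
structure EDC (D : Type u) [DistribLattice D] [BoundedOrder D] where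
  C : D → D → Prop
  Cd : D → D → Prop
  Ll : D → D → Prop
  c1 : ∀ a b, C a b → a ≠ ⊥ ∧ b ≠ ⊥
  c2 : ∀ a a' b b', C a b → a ≤ a' → b ≤ b' → C a' b'
  c3 : ∀ a b c, C a (b ⊔ c) → C a b ∨ C a c
  c4 : ∀ a b, C a b → C b a
  c5 : ∀ a b, a ⊓ b ≠ ⊥ → C a b
  cd1 : ∀ a b, Cd a b → a ≠ ⊤ ∧ b ≠ ⊤
  cd2 : ∀ a a' b b', Cd a b → a' ≤ a → b' ≤ b → Cd a' b'
  cd3 : ∀ a b c, Cd a (b ⊓ c) → Cd a b ∨ Cd a c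
  cd4 : ∀ a b, Cd a b → Cd b a
  cd5 : ∀ a b, a ⊔ b ≠ ⊤ → Cd a b
  ll1 : Ll ⊥ ⊥
  ll2 : Ll ⊤ ⊤
  ll3 : ∀ a b, Ll a b → a ≤ b
  ll4 : ∀ a a' b b', a' ≤ a → Ll a b → b ≤ b' → Ll a' b'
  ll5 : ∀ a b c, Ll a c → Ll b c → Ll (a ⊔ b) c
  ll6 : ∀ a b c, Ll c a → Ll c b → Ll c (a ⊓ b)
  ll7 : ∀ a b c d, Ll a b → Ll (b ⊓ c) d → Ll c (a ⊔ d) → Ll c d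
  mc1 : ∀ a b c, C a b → Ll a c → C a (b ⊓ c)
  mc2 : ∀ a b c d, ¬ C a (b ⊓ c) → C a b → ¬ C (a ⊓ d) b → Cd d c
  mcd1 : ∀ a b c, Cd a b → Ll c a → Cd a (b ⊔ c)
  mcd2 : ∀ a b c d, ¬ Cd a (b ⊔ c) → Cd a b → ¬ Cd (a ⊔ d) b → C d c
  mll1 : ∀ a b c, ¬ Cd a b → Ll (a ⊓ c) b → Ll c b
  mll2 : ∀ a b c, ¬ C a b → Ll b (a ⊔ c) → Ll b c

/-- A filter of a bounded (distributive) lattice. -/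
def EDCFilter {D : Type u} [DistribLattice D] [BoundedOrder D] (F : Set D) : Prop :=
  ⊤ ∈ F ∧ (∀ a b : D, a ∈ F → a ≤ b → b ∈ F) ∧ (∀ a b : D, a ∈ F → b ∈ F → a ⊓ b ∈ F)

/-- An ideal of a bounded (distributive) lattice. -/
def EDCIdeal {D : Type u} [DistribLattice D] [BoundedOrder D] (I : Set D) : Prop :=
  ⊥ ∈ I ∧ (∀ a b : D, a ∈ I → b ≤ a → b ∈ I) ∧ (∀ a b : D, a ∈ I → b ∈ I → a ⊔ b ∈ I)

/-- A prime filter: a proper filter such that `a ⊔ b ∈ F` implies `a ∈ F` or `b ∈ F`. -/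
def PrimeFilter {D : Type u} [DistribLattice D] [BoundedOrder D] (F : Set D) : Prop :=
  EDCFilter F ∧ ⊥ ∉ F ∧ ∀ a b : D, a ⊔ b ∈ F → a ∈ F ∨ b ∈ F

/-- The canonical relation `R^c` between (prime) filters of an EDC-lattice. -/
def Rc {D : Type u} [DistribLattice D] [BoundedOrder D] (E : EDC D) (Γ Δ : Set D) : Prop :=
  ∀ a b : D,
    (a ∈ Γ → b ∈ Δ → E.C a b) ∧
    (a ∉ Γ → b ∉ Δ → E.Cd a b) ∧
    (a ∈ Γ → b ∉ Δ → ¬ E.Ll a b) ∧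
    (a ∉ Γ → b ∈ Δ → ¬ E.Ll b a)

namespace Stmt16Aux

variable {D : Type u} [DistribLattice D] [BoundedOrder D]

/-- A clan of an EDC-lattice. -/
def IsClan (E : EDC D) (Γ : Set D) : Prop :=
  ⊤ ∈ Γ ∧ (∀ a b : D, a ∈ Γ → a ≤ b → b ∈ Γ) ∧
    (∀ a b : D, a ⊔ b ∈ Γ → a ∈ Γ ∨ b ∈ Γ) ∧ (∀ a b : D, a ∈ Γ → b ∈ Γ → E.C a b)

lemma IsClan.bot_not_mem {E : EDC D} {Γ : Set D} (h : IsClan E Γ) : ⊥ ∉ Γ := fun hb =>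
  (E.c1 ⊥ ⊥ (h.2.2.2 _ _ hb hb)).1 rfl

lemma primeFilter_isClan (E : EDC D) {F : Set D} (hF : PrimeFilter F) : IsClan E F := by
  refine ⟨hF.1.1, hF.1.2.1, hF.2.2, fun a b ha hb => E.c5 a b ?_⟩
  intro h
  exact hF.2.1 (h ▸ hF.1.2.2 a b ha hb)

lemma principalFilter (a : D) : EDCFilter {x : D | a ≤ x} :=
  ⟨le_top, fun x y hx hxy => le_trans hx hxy, fun x y hx hy => le_inf hx hy⟩

/-- Prime filter separation theorem. -/
lemma exists_primeFilter {a b : D} (hab : ¬ a ≤ b) :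
    ∃ F : Set D, PrimeFilter F ∧ a ∈ F ∧ b ∉ F := by
  classical
  set S : Set (Set D) := {F | EDCFilter F ∧ a ∈ F ∧ b ∉ F} with hS
  have h0 : {x : D | a ≤ x} ∈ S := ⟨principalFilter a, le_refl a, hab⟩
  obtain ⟨m, hm0, hmax⟩ := by
    refine zorn_subset_nonempty S ?_ _ h0
    intro c hcS hchain hcne
    refine ⟨⋃₀ c, ⟨⟨?_, ?_, ?_⟩, ?_, ?_⟩, fun s hs => Set.subset_sUnion_of_mem hs⟩
    · obtain ⟨t, ht⟩ := hcne; exact ⟨t, ht, (hcS ht).1.1⟩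
    · rintro x y ⟨t, ht, hx⟩ hxy; exact ⟨t, ht, (hcS ht).1.2.1 x y hx hxy⟩
    · rintro x y ⟨t, ht, hx⟩ ⟨t', ht', hy⟩
      rcases hchain.total ht ht' with h | h
      · exact ⟨t', ht', (hcS ht').1.2.2 x y (h hx) hy⟩
      · exact ⟨t, ht, (hcS ht).1.2.2 x y hx (h hy)⟩
    · obtain ⟨t, ht⟩ := hcne; exact ⟨t, ht, (hcS ht).2.1⟩
    · rintro ⟨t, ht, hbt⟩; exact (hcS ht).2.2 hbt
  obtain ⟨hmF, ham, hbm⟩ := hmax.1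
  refine ⟨m, ⟨hmF, fun hbot => hbm (hmF.2.1 ⊥ b hbot bot_le), ?_⟩, ham, hbm⟩
  intro u v huv
  by_contra hcon
  push_neg at hcon
  obtain ⟨hu, hv⟩ := hcon
  have henl : ∀ w : D, w ∉ m → ∃ x ∈ m, x ⊓ w ≤ b := by
    intro w hw
    set Fw : Set D := {z | ∃ x ∈ m, x ⊓ w ≤ z} with hFwdef
    have hFwfil : EDCFilter Fw := by
      refine ⟨⟨⊤, hmF.1, le_top⟩, ?_, ?_⟩
      · rintro z z' ⟨x, hx, hxz⟩ hzz'; exact ⟨x, hx, le_trans hxz hzz'⟩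
      · rintro z z' ⟨x, hx, hxz⟩ ⟨x', hx', hxz'⟩
        exact ⟨x ⊓ x', hmF.2.2 x x' hx hx',
          le_inf (le_trans (inf_le_inf_right w inf_le_left) hxz)
                 (le_trans (inf_le_inf_right w inf_le_right) hxz')⟩
    have hmsub : m ⊆ Fw := fun x hx => ⟨x, hx, inf_le_left⟩
    by_contra hnb
    push_neg at hnb
    have hbFw : b ∉ Fw := by
      rintro ⟨x, hx, hxb⟩; exact hnb x hx hxb
    have hFwS : Fw ∈ S := ⟨hFwfil, hmsub ham, hbFw⟩
    have : Fw ⊆ m := hmax.2 hFwS hmsub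
    exact hw (this ⟨⊤, hmF.1, by simpa using inf_le_right⟩)
  obtain ⟨x, hx, hxu⟩ := henl u hu
  obtain ⟨y, hy, hyv⟩ := henl v hv
  have hmem : (x ⊓ y) ⊓ (u ⊔ v) ∈ m := hmF.2.2 _ _ (hmF.2.2 x y hx hy) huv
  have hle : (x ⊓ y) ⊓ (u ⊔ v) ≤ b := by
    rw [inf_sup_left]
    exact sup_le (le_trans (inf_le_inf_right u inf_le_left) hxu)
      (le_trans (inf_le_inf_right v inf_le_right) hyv)
  exact hbm (hmF.2.1 _ _ hmem hle)

/-- Prime extension preserving contact with a set `S0`. -/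
lemma exists_primeFilter_contact (E : EDC D) {F0 S0 : Set D} (hF0 : EDCFilter F0)
    (hS0inf : ∀ s ∈ S0, ∀ t ∈ S0, s ⊓ t ∈ S0)
    (H : ∀ x ∈ F0, ∀ s ∈ S0, E.C x s) :
    ∃ F : Set D, EDCFilter F ∧ F0 ⊆ F ∧ (∀ u v : D, u ⊔ v ∈ F → u ∈ F ∨ v ∈ F) ∧
      ∀ x ∈ F, ∀ s ∈ S0, E.C x s := by
  classical
  set S : Set (Set D) := {F | EDCFilter F ∧ F0 ⊆ F ∧ ∀ x ∈ F, ∀ s ∈ S0, E.C x s} with hS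
  have h0 : F0 ∈ S := ⟨hF0, subset_rfl, H⟩
  obtain ⟨m, hm0, hmax⟩ := by
    refine zorn_subset_nonempty S ?_ _ h0
    intro c hcS hchain hcne
    refine ⟨⋃₀ c, ⟨⟨?_, ?_, ?_⟩, ?_, ?_⟩, fun s hs => Set.subset_sUnion_of_mem hs⟩
    · obtain ⟨t, ht⟩ := hcne; exact ⟨t, ht, (hcS ht).1.1⟩
    · rintro x y ⟨t, ht, hx⟩ hxy; exact ⟨t, ht, (hcS ht).1.2.1 x y hx hxy⟩
    · rintro x y ⟨t, ht, hx⟩ ⟨t', ht', hy⟩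
      rcases hchain.total ht ht' with h | h
      · exact ⟨t', ht', (hcS ht').1.2.2 x y (h hx) hy⟩
      · exact ⟨t, ht, (hcS ht).1.2.2 x y hx (h hy)⟩
    · obtain ⟨t, ht⟩ := hcne; exact fun x hx => ⟨t, ht, (hcS ht).2.1 hx⟩
    · rintro x ⟨t, ht, hxt⟩ s hs; exact (hcS ht).2.2 x hxt s hs
  obtain ⟨hmF, hm0sub, hmC⟩ := hmax.1
  refine ⟨m, hmF, hm0sub, ?_, hmC⟩
  intro u v huv
  by_contra hcon
  push_neg at hcon
  obtain ⟨hu, hv⟩ := hcon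
  have henl : ∀ w : D, w ∉ m → ∃ x ∈ m, ∃ s ∈ S0, ¬ E.C (x ⊓ w) s := by
    intro w hw
    set Fw : Set D := {z | ∃ x ∈ m, x ⊓ w ≤ z} with hFwdef
    have hFwfil : EDCFilter Fw := by
      refine ⟨⟨⊤, hmF.1, le_top⟩, ?_, ?_⟩
      · rintro z z' ⟨x, hx, hxz⟩ hzz'; exact ⟨x, hx, le_trans hxz hzz'⟩
      · rintro z z' ⟨x, hx, hxz⟩ ⟨x', hx', hxz'⟩
        exact ⟨x ⊓ x', hmF.2.2 x x' hx hx',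
          le_inf (le_trans (inf_le_inf_right w inf_le_left) hxz)
                 (le_trans (inf_le_inf_right w inf_le_right) hxz')⟩
    have hmsub : m ⊆ Fw := fun x hx => ⟨x, hx, inf_le_left⟩
    by_contra hnb
    push_neg at hnb
    have hFwC : ∀ z ∈ Fw, ∀ s ∈ S0, E.C z s := by
      rintro z ⟨x, hx, hxz⟩ s hs
      exact E.c2 _ _ _ _ (hnb x hx s hs) hxz le_rfl
    have hFwS : Fw ∈ S := ⟨hFwfil, subset_trans hm0sub hmsub, hFwC⟩
    have : Fw ⊆ m := hmax.2 hFwS hmsub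
    exact hw (this ⟨⊤, hmF.1, by simpa using inf_le_right⟩)
  obtain ⟨x, hx, s, hs, hxu⟩ := henl u hu
  obtain ⟨y, hy, t, ht, hyv⟩ := henl v hv
  have hmem : (x ⊓ y) ⊓ (u ⊔ v) ∈ m := hmF.2.2 _ _ (hmF.2.2 x y hx hy) huv
  have hC1 : E.C ((x ⊓ y) ⊓ (u ⊔ v)) (s ⊓ t) := hmC _ hmem _ (hS0inf s hs t ht)
  rw [inf_sup_left] at hC1
  have hC2 := E.c3 _ _ _ (E.c4 _ _ hC1)
  rcases hC2 with h | h
  · exact hxu (E.c2 _ _ _ _ (E.c4 _ _ h)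
      (inf_le_inf_right u inf_le_left) inf_le_left)
  · exact hyv (E.c2 _ _ _ _ (E.c4 _ _ h)
      (inf_le_inf_right v inf_le_right) inf_le_right)

/-- Two filters in mutual contact extend to a common clan. -/
lemma exists_clan (E : EDC D) {F0 G0 : Set D} (hF0 : EDCFilter F0) (hG0 : EDCFilter G0)
    (H : ∀ x ∈ F0, ∀ y ∈ G0, E.C x y) :
    ∃ Γ : Set D, IsClan E Γ ∧ F0 ⊆ Γ ∧ G0 ⊆ Γ := by
  obtain ⟨F1, hF1fil, hF1sub, hF1pr, hF1C⟩ :=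
    exists_primeFilter_contact E hF0 (fun s hs t ht => hG0.2.2 s t hs ht) H
  obtain ⟨G1, hG1fil, hG1sub, hG1pr, hG1C⟩ :=
    exists_primeFilter_contact E hG0 (fun s hs t ht => hF1fil.2.2 s t hs ht)
      (fun y hy x hx => E.c4 _ _ (hF1C x hx y hy))
  refine ⟨F1 ∪ G1, ⟨Or.inl hF1fil.1, ?_, ?_, ?_⟩,
    subset_trans hF1sub Set.subset_union_left, subset_trans hG1sub Set.subset_union_right⟩
  · rintro a b (ha | ha) hab
    · exact Or.inl (hF1fil.2.1 a b ha hab)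
    · exact Or.inr (hG1fil.2.1 a b ha hab)
  · rintro a b (hab | hab)
    · rcases hF1pr a b hab with h | h
      · exact Or.inl (Or.inl h)
      · exact Or.inr (Or.inl h)
    · rcases hG1pr a b hab with h | h
      · exact Or.inl (Or.inr h)
      · exact Or.inr (Or.inr h)
  · rintro a b (ha | ha) (hb | hb)
    · refine E.c5 a b fun h0 => ?_
      have := hF1C _ (hF1fil.2.2 a b ha hb) ⊤ hG0.1
      exact (E.c1 _ _ this).1 h0
    · exact E.c4 _ _ (hG1C b hb a ha)
    · exact hG1C a ha b hb
    · refine E.c5 a b fun h0 => ?_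
      have := hG1C _ (hG1fil.2.2 a b ha hb) ⊤ hF1fil.1
      exact (E.c1 _ _ this).1 h0

end Stmt16Aux

namespace Stmt16Aux

variable {D : Type u} [DistribLattice D] [BoundedOrder D]

/-- The filter of `⊔`-complements of `b`. -/
def Uset (b : D) : Set D := {c | b ⊔ c = ⊤}

lemma uset_filter (b : D) : EDCFilter (Uset b) := by
  refine ⟨sup_top_eq b, ?_, ?_⟩
  · intro c c' hc hcc'
    exact top_le_iff.mp (hc ▸ sup_le_sup_left hcc' b)
  · intro c c' hc hc'
    show b ⊔ (c ⊓ c') = ⊤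
    rw [sup_inf_left, hc, hc', inf_top_eq]

lemma cd_contact (E : EDC D) {a b : D} (h : E.Cd a b) :
    ∀ c ∈ Uset a, ∀ d ∈ Uset b, E.C c d := by
  intro c hc d hd
  refine E.mcd2 a b d c ?_ h ?_
  · intro hcd; exact (E.cd1 _ _ hcd).2 hd
  · intro hcd; exact (E.cd1 _ _ hcd).1 hc

lemma ll_top (E : EDC D) (a : D) : E.Ll a ⊤ := E.ll4 ⊤ a ⊤ ⊤ le_top E.ll2 le_rfl

lemma nll_contact (E : EDC D) {a b : D} (h : ¬ E.Ll a b) :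
    ∀ c ∈ Uset b, E.C a c := by
  intro c hc
  by_contra hC
  have hca : ¬ E.C c a := fun h' => hC (E.c4 _ _ h')
  have h1 : E.Ll a (c ⊔ b) := by
    have : (c ⊔ b : D) = ⊤ := by rw [sup_comm]; exact hc
    rw [this]; exact ll_top E a
  exact h (E.mll2 c a b hca h1)

lemma finite_subset_chain {c : Set (Set D)} (hch : IsChain (· ⊆ ·) c) (hcne : c.Nonempty)
    {s : Finset D} (hsub : (↑s : Set D) ⊆ ⋃₀ c) : ∃ t ∈ c, (↑s : Set D) ⊆ t := by
  classical
  induction s using Finset.induction_on with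
  | empty =>
    obtain ⟨t, ht⟩ := hcne; exact ⟨t, ht, by simp⟩
  | @insert a s ha ih =>
    have h1 : a ∈ ⋃₀ c := hsub (by simp)
    obtain ⟨t1, ht1, hat1⟩ := h1
    obtain ⟨t2, ht2, hst2⟩ := ih (fun x hx => hsub (by simp [Finset.mem_insert]; right; exact_mod_cast hx))
    rcases hch.total ht1 ht2 with h | h
    · refine ⟨t2, ht2, fun x hx => ?_⟩
      rcases Finset.mem_insert.mp (by exact_mod_cast hx) with rfl | hx'
      · exact h hat1
      · exact hst2 (by exact_mod_cast hx')
    · refine ⟨t1, ht1, fun x hx => ?_⟩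
      rcases Finset.mem_insert.mp (by exact_mod_cast hx) with rfl | hx'
      · exact hat1
      · exact h (hst2 (by exact_mod_cast hx'))

/-- Finitely clan-consistent sets extend to clans. -/
lemma exists_clan_of_fcc (E : EDC D) {A : Set D}
    (hA : ∀ B : Set D, B ⊆ A → B.Finite → ∃ Γ : Set D, IsClan E Γ ∧ B ⊆ Γ) :
    ∃ Γ : Set D, IsClan E Γ ∧ A ⊆ Γ := by
  classical
  set T : Set (Set D) :=
    {Γ | A ⊆ Γ ∧ ∀ B : Set D, B ⊆ Γ → B.Finite → ∃ Δ : Set D, IsClan E Δ ∧ B ⊆ Δ} with hT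
  have h0 : A ∈ T := ⟨subset_rfl, hA⟩
  obtain ⟨m, hm0, hmax⟩ := by
    refine zorn_subset_nonempty T ?_ _ h0
    intro c hcT hchain hcne
    refine ⟨⋃₀ c, ⟨?_, ?_⟩, fun s hs => Set.subset_sUnion_of_mem hs⟩
    · obtain ⟨t, ht⟩ := hcne
      exact subset_trans (hcT ht).1 (Set.subset_sUnion_of_mem ht)
    · intro B hB hBfin
      obtain ⟨s, rfl⟩ := hBfin.exists_finset_coe
      obtain ⟨t, ht, hst⟩ := finite_subset_chain hchain hcne hB
      exact (hcT ht).2 _ hst (Finset.finite_toSet s)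
  obtain ⟨hAm, hfcc⟩ := hmax.1
  have htop : ⊤ ∈ m := by
    have hins : insert ⊤ m ∈ T := by
      refine ⟨subset_trans hAm (Set.subset_insert _ _), ?_⟩
      intro B hB hBfin
      obtain ⟨Δ, hΔ, hBΔ⟩ := hfcc (B \ {⊤}) (fun x hx =>
        (hB hx.1).resolve_left hx.2) (hBfin.diff)
      refine ⟨Δ, hΔ, fun x hx => ?_⟩
      by_cases hx' : x = ⊤
      · exact hx' ▸ hΔ.1
      · exact hBΔ ⟨hx, hx'⟩
    exact hmax.2 hins (Set.subset_insert _ _) (Set.mem_insert _ _)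
  have hup : ∀ x y : D, x ∈ m → x ≤ y → y ∈ m := by
    intro x y hx hxy
    have hins : insert y m ∈ T := by
      refine ⟨subset_trans hAm (Set.subset_insert _ _), ?_⟩
      intro B hB hBfin
      obtain ⟨Δ, hΔ, hBΔ⟩ := hfcc (insert x (B \ {y}))
        (by
          intro z hz
          rcases Set.mem_insert_iff.mp hz with rfl | hz'
          · exact hx
          · exact (hB hz'.1).resolve_left hz'.2)
        ((hBfin.diff).insert x)
      refine ⟨Δ, hΔ, fun z hz => ?_⟩
      by_cases hz' : z = y
      · exact hz' ▸ hΔ.2.1 x y (hBΔ (Set.mem_insert _ _)) hxy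
      · exact hBΔ (Set.mem_insert_of_mem _ ⟨hz, hz'⟩)
    exact hmax.2 hins (Set.subset_insert _ _) (Set.mem_insert _ _)
  have hpairs : ∀ x y : D, x ∈ m → y ∈ m → E.C x y := by
    intro x y hx hy
    obtain ⟨Δ, hΔ, hBΔ⟩ := hfcc {x, y} (by
      intro z hz; rcases hz with rfl | hz; exact hx; exact hz ▸ hy)
      ((Set.finite_singleton y).insert x)
    exact hΔ.2.2.2 x y (hBΔ (by simp)) (hBΔ (by simp))
  have hprime : ∀ u v : D, u ⊔ v ∈ m → u ∈ m ∨ v ∈ m := by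
    intro u v huv
    by_contra hcon
    push_neg at hcon
    obtain ⟨hu, hv⟩ := hcon
    have hbad : ∀ w : D, w ∉ m → ∃ Bw : Set D, Bw ⊆ insert w m ∧ Bw.Finite ∧
        ∀ Δ : Set D, IsClan E Δ → ¬ Bw ⊆ Δ := by
      intro w hw
      by_contra hno
      push_neg at hno
      have hins : insert w m ∈ T := by
        refine ⟨subset_trans hAm (Set.subset_insert _ _), ?_⟩
        intro B hB hBfin
        obtain ⟨Δ, hΔ, hBΔ⟩ := hno B hB hBfin
        exact ⟨Δ, hΔ, hBΔ⟩
      exact hw (hmax.2 hins (Set.subset_insert _ _) (Set.mem_insert _ _))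
    obtain ⟨Bu, hBu, hBufin, hBubad⟩ := hbad u hu
    obtain ⟨Bv, hBv, hBvfin, hBvbad⟩ := hbad v hv
    obtain ⟨Δ, hΔ, hBΔ⟩ := hfcc ((Bu \ {u}) ∪ (Bv \ {v}) ∪ {u ⊔ v})
      (by
        intro z hz
        rcases hz with (hz | hz) | hz
        · exact (hBu hz.1).resolve_left hz.2
        · exact (hBv hz.1).resolve_left hz.2
        · exact hz ▸ huv)
      (((hBufin.diff).union (hBvfin.diff)).union (Set.finite_singleton _))
    have huvΔ : u ⊔ v ∈ Δ := hBΔ (Or.inr rfl)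
    rcases hΔ.2.2.1 u v huvΔ with h | h
    · refine hBubad Δ hΔ (fun z hz => ?_)
      by_cases hz' : z = u
      · exact hz' ▸ h
      · exact hBΔ (Or.inl (Or.inl ⟨hz, hz'⟩))
    · refine hBvbad Δ hΔ (fun z hz => ?_)
      by_cases hz' : z = v
      · exact hz' ▸ h
      · exact hBΔ (Or.inl (Or.inr ⟨hz, hz'⟩))
  exact ⟨m, ⟨htop, hup, hprime, hpairs⟩, hAm⟩

end Stmt16Aux

namespace Stmt16Aux

variable {D : Type u} [DistribLattice D] [BoundedOrder D]

/-- The clan space of an EDC-lattice. -/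
def ClanPt (E : EDC D) : Type u := {Γ : Set D // IsClan E Γ}

/-- The canonical embedding into sets of clans. -/
def hset (E : EDC D) (a : D) : Set (ClanPt E) := {Γ : ClanPt E | a ∈ Γ.1}

lemma hset_top (E : EDC D) : hset E ⊤ = Set.univ :=
  Set.eq_univ_of_forall fun Γ => Γ.2.1

lemma hset_bot (E : EDC D) : hset E ⊥ = ∅ :=
  Set.eq_empty_iff_forall_notMem.mpr fun Γ h => Γ.2.bot_not_mem h

lemma hset_sup (E : EDC D) (a b : D) : hset E (a ⊔ b) = hset E a ∪ hset E b := by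
  ext Γ
  constructor
  · intro h; exact Γ.2.2.2.1 a b h
  · rintro (h | h)
    · exact Γ.2.2.1 a (a ⊔ b) h le_sup_left
    · exact Γ.2.2.1 b (a ⊔ b) h le_sup_right

lemma hset_mono (E : EDC D) {a b : D} (hab : a ≤ b) : hset E a ⊆ hset E b :=
  fun Γ h => Γ.2.2.1 a b h hab

lemma hset_le_iff (E : EDC D) (a b : D) : a ≤ b ↔ hset E a ⊆ hset E b := by
  constructor
  · exact hset_mono E
  · intro h
    by_contra hab
    obtain ⟨F, hF, haF, hbF⟩ := exists_primeFilter hab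
    exact hbF (h (show (⟨F, primeFilter_isClan E hF⟩ : ClanPt E) ∈ hset E a from haF))

lemma hset_injective (E : EDC D) : Function.Injective (hset E) := by
  intro a b hab
  exact le_antisymm ((hset_le_iff E a b).2 hab.le) ((hset_le_iff E b a).2 hab.ge)

lemma hset_univ_iff (E : EDC D) (a : D) : hset E a = Set.univ ↔ a = ⊤ := by
  constructor
  · intro h
    by_contra ha
    have : ¬ (⊤ : D) ≤ a := fun hle => ha (top_le_iff.mp hle)
    obtain ⟨F, hF, -, haF⟩ := exists_primeFilter this
    have : (⟨F, primeFilter_isClan E hF⟩ : ClanPt E) ∈ hset E a := by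
      rw [h]; trivial
    exact haF this
  · rintro rfl; exact hset_top E

instance clanTop (E : EDC D) : TopologicalSpace (ClanPt E) where
  IsOpen s := ∃ A : Set D, sᶜ = ⋂ a ∈ A, hset E a
  isOpen_univ := by
    refine ⟨{⊥}, ?_⟩
    simp [hset_bot]
  isOpen_inter := by
    rintro s t ⟨A, hA⟩ ⟨B, hB⟩
    refine ⟨Set.image2 (· ⊔ ·) A B, ?_⟩
    ext Γ
    simp only [Set.mem_compl_iff, Set.mem_inter_iff, Set.mem_iInter, Set.mem_image2]
    constructor
    · intro h a
      rintro ⟨x, hx, y, hy, rfl⟩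
      rcases not_and_or.mp h with h' | h'
      · have : Γ ∈ sᶜ := h'
        rw [hA] at this
        simp only [Set.mem_iInter] at this
        exact Γ.2.2.1 x (x ⊔ y) (this x hx) le_sup_left
      · have : Γ ∈ tᶜ := h'
        rw [hB] at this
        simp only [Set.mem_iInter] at this
        exact Γ.2.2.1 y (x ⊔ y) (this y hy) le_sup_right
    · intro h
      rintro ⟨hs, ht⟩
      by_cases hall : ∀ a ∈ A, a ∈ Γ.1
      · have : Γ ∈ sᶜ := by
          rw [hA]; simp only [Set.mem_iInter]; exact fun a ha => hall a ha
        exact this hs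
      · push_neg at hall
        obtain ⟨a, ha, haΓ⟩ := hall
        by_cases hallB : ∀ b ∈ B, b ∈ Γ.1
        · have : Γ ∈ tᶜ := by
            rw [hB]; simp only [Set.mem_iInter]; exact fun b hb => hallB b hb
          exact this ht
        · push_neg at hallB
          obtain ⟨b, hb, hbΓ⟩ := hallB
          have : a ⊔ b ∈ Γ.1 := h _ ⟨a, ha, b, hb, rfl⟩
          rcases Γ.2.2.2.1 a b this with h' | h'
          · exact haΓ h'
          · exact hbΓ h'
  isOpen_sUnion := by
    intro O hO
    classical
    refine ⟨⋃ (s : Set (ClanPt E)) (hs : s ∈ O), Classical.choose (hO s hs), ?_⟩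
    ext Γ
    constructor
    · intro h
      simp only [Set.mem_iInter]
      intro a ha
      obtain ⟨s, hs, hmem⟩ := Set.mem_iUnion₂.mp ha
      have hΓs : Γ ∈ sᶜ := fun h' => h ⟨s, hs, h'⟩
      rw [Classical.choose_spec (hO s hs)] at hΓs
      simp only [Set.mem_iInter] at hΓs
      exact hΓs a hmem
    · intro h hmem
      obtain ⟨s, hs, hΓs⟩ := hmem
      have : Γ ∈ sᶜ := by
        rw [Classical.choose_spec (hO s hs)]
        simp only [Set.mem_iInter]
        intro a ha
        simp only [Set.mem_iInter] at h
        exact h a (Set.mem_iUnion₂.mpr ⟨s, hs, ha⟩)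
      exact this hΓs

lemma isOpen_iff (E : EDC D) {s : Set (ClanPt E)} :
    IsOpen s ↔ ∃ A : Set D, sᶜ = ⋂ a ∈ A, hset E a := Iff.rfl

lemma isClosed_iff (E : EDC D) {s : Set (ClanPt E)} :
    IsClosed s ↔ ∃ A : Set D, s = ⋂ a ∈ A, hset E a := by
  rw [← isOpen_compl_iff, isOpen_iff, compl_compl]

lemma isClosed_hset (E : EDC D) (a : D) : IsClosed (hset E a) :=
  (isClosed_iff E).mpr ⟨{a}, by simp⟩

lemma closure_eq (E : EDC D) (s : Set (ClanPt E)) :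
    closure s = ⋂ a ∈ {a : D | s ⊆ hset E a}, hset E a := by
  apply subset_antisymm
  · refine closure_minimal ?_ ?_
    · intro x hx
      simp only [Set.mem_iInter, Set.mem_setOf_eq]
      exact fun a ha => ha hx
    · exact isClosed_biInter fun a _ => isClosed_hset E a
  · obtain ⟨A, hA⟩ := (isClosed_iff E).mp (isClosed_closure (s := s))
    intro Γ hΓ
    rw [hA]
    simp only [Set.mem_iInter]
    intro a ha
    simp only [Set.mem_iInter, Set.mem_setOf_eq] at hΓ
    refine hΓ a ?_
    intro x hx
    have : x ∈ closure s := subset_closure hx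
    rw [hA] at this
    simp only [Set.mem_iInter] at this
    exact this a ha

lemma compl_hset_subset_iff (E : EDC D) (b c : D) :
    (hset E b)ᶜ ⊆ hset E c ↔ b ⊔ c = ⊤ := by
  constructor
  · intro h
    by_contra hbc
    have : ¬ (⊤ : D) ≤ b ⊔ c := fun hle => hbc (top_le_iff.mp hle)
    obtain ⟨F, hF, -, hsF⟩ := exists_primeFilter this
    set Γ : ClanPt E := ⟨F, primeFilter_isClan E hF⟩
    have hbF : b ∉ F := fun h' => hsF (hF.1.2.1 b (b ⊔ c) h' le_sup_left)
    have hcF : c ∉ F := fun h' => hsF (hF.1.2.1 c (b ⊔ c) h' le_sup_right)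
    exact hcF (h (show Γ ∈ (hset E b)ᶜ from hbF))
  · intro h Γ hΓ
    have hmem : b ⊔ c ∈ Γ.1 := by rw [h]; exact Γ.2.1
    rcases Γ.2.2.2.1 b c hmem with h' | h'
    · exact absurd h' hΓ
    · exact h'

lemma interior_hset (E : EDC D) (b : D) :
    interior (hset E b) = {Γ : ClanPt E | ∃ c, b ⊔ c = ⊤ ∧ c ∉ Γ.1} := by
  have h1 : interior (hset E b) = (closure (hset E b)ᶜ)ᶜ := by
    rw [closure_compl, compl_compl]
  rw [h1, closure_eq]
  ext Γ
  simp only [Set.mem_compl_iff, Set.mem_iInter, Set.mem_setOf_eq, not_forall]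
  constructor
  · rintro ⟨c, hc, hcΓ⟩
    exact ⟨c, (compl_hset_subset_iff E b c).mp hc, hcΓ⟩
  · rintro ⟨c, hc, hcΓ⟩
    exact ⟨c, (compl_hset_subset_iff E b c).mpr hc, hcΓ⟩

lemma interior_hset_subset (E : EDC D) (b : D) : interior (hset E b) ⊆ hset E b :=
  interior_subset

lemma regclosed_hset (E : EDC D)
    (hExtO : ∀ a b : D, ¬ a ≤ b → ∃ c : D, a ⊔ c = ⊤ ∧ b ⊔ c ≠ ⊤) (b : D) :
    closure (interior (hset E b)) = hset E b := by
  apply subset_antisymm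
  · exact closure_minimal interior_subset (isClosed_hset E b)
  · rw [closure_eq]
    intro Γ hΓ
    simp only [Set.mem_iInter, Set.mem_setOf_eq]
    intro a ha
    -- a satisfies: interior (hset E b) ⊆ hset E a; show b ≤ a
    have hba : b ≤ a := by
      by_contra hba
      obtain ⟨c, hc1, hc2⟩ := hExtO b a hba
      have : ¬ (⊤ : D) ≤ a ⊔ c := fun hle => hc2 (top_le_iff.mp hle)
      obtain ⟨F, hF, -, hsF⟩ := exists_primeFilter this
      set Δ : ClanPt E := ⟨F, primeFilter_isClan E hF⟩
      have haF : a ∉ F := fun h' => hsF (hF.1.2.1 a (a ⊔ c) h' le_sup_left)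
      have hcF : c ∉ F := fun h' => hsF (hF.1.2.1 c (a ⊔ c) h' le_sup_right)
      have : Δ ∈ interior (hset E b) := by
        rw [interior_hset]; exact ⟨c, hc1, hcF⟩
      exact haF (ha this)
    exact hset_mono E hba hΓ

lemma interior_inf (E : EDC D) (x y : D) :
    interior (hset E x) ∩ interior (hset E y) = interior (hset E (x ⊓ y)) := by
  rw [interior_hset, interior_hset, interior_hset]
  ext Γ
  simp only [Set.mem_inter_iff, Set.mem_setOf_eq]
  constructor
  · rintro ⟨⟨c, hc, hcΓ⟩, ⟨d, hd, hdΓ⟩⟩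
    refine ⟨c ⊔ d, ?_, ?_⟩
    · rw [sup_inf_right]
      have h1 : x ⊔ (c ⊔ d) = ⊤ := top_le_iff.mp (by
        rw [← hc]; exact sup_le_sup_left le_sup_left x)
      have h2 : y ⊔ (c ⊔ d) = ⊤ := top_le_iff.mp (by
        rw [← hd]; exact sup_le_sup_left le_sup_right y)
      rw [h1, h2, inf_top_eq]
    · intro h
      rcases Γ.2.2.2.1 c d h with h' | h'
      · exact hcΓ h'
      · exact hdΓ h'
  · rintro ⟨e, he, heΓ⟩
    constructor
    · refine ⟨e, top_le_iff.mp ?_, heΓ⟩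
      rw [← he]; exact sup_le_sup_right inf_le_left e
    · refine ⟨e, top_le_iff.mp ?_, heΓ⟩
      rw [← he]; exact sup_le_sup_right inf_le_right e

lemma hset_inf (E : EDC D)
    (hExtO : ∀ a b : D, ¬ a ≤ b → ∃ c : D, a ⊔ c = ⊤ ∧ b ⊔ c ≠ ⊤) (x y : D) :
    hset E (x ⊓ y) = closure (interior (hset E x ∩ hset E y)) := by
  rw [interior_inter, interior_inf, regclosed_hset E hExtO]

end Stmt16Aux

namespace Stmt16Aux

variable {D : Type u} [DistribLattice D] [BoundedOrder D]

instance clanT0 (E : EDC D) : T0Space (ClanPt E) := by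
  refine ⟨fun Γ Δ hins => Subtype.ext (Set.ext fun a => ?_)⟩
  have := (inseparable_iff_forall_isOpen.mp hins) ((hset E a)ᶜ)
    (isClosed_hset E a).isOpen_compl
  simp only [Set.mem_compl_iff] at this
  constructor
  · intro ha
    by_contra hd
    exact (this.mpr hd) ha
  · intro ha
    by_contra hd
    exact (this.mp hd) ha

instance clanCompact (E : EDC D) : CompactSpace (ClanPt E) := by
  classical
  rw [← isCompact_univ_iff]
  refine isCompact_of_finite_subfamily_closed ?_
  intro ι Z hZ hempty
  have hA : ∀ i, ∃ A : Set D, Z i = ⋂ a ∈ A, hset E a := fun i => (isClosed_iff E).mp (hZ i)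
  choose A hAZ using hA
  set AA : Set D := ⋃ i, A i with hAAdef
  have hnoclan : ¬ ∃ Γ : Set D, IsClan E Γ ∧ AA ⊆ Γ := by
    rintro ⟨Γ, hΓ, hsub⟩
    have hmem : (⟨Γ, hΓ⟩ : ClanPt E) ∈ Set.univ ∩ ⋂ i, Z i := by
      refine ⟨trivial, Set.mem_iInter.mpr fun i => ?_⟩
      rw [hAZ i]
      exact Set.mem_iInter₂.mpr fun a ha => hsub (Set.mem_iUnion.mpr ⟨i, ha⟩)
    rw [hempty] at hmem
    exact hmem
  have hfcc : ¬ ∀ B : Set D, B ⊆ AA → B.Finite →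
      ∃ Γ : Set D, IsClan E Γ ∧ B ⊆ Γ := fun h => hnoclan (exists_clan_of_fcc E h)
  push_neg at hfcc
  obtain ⟨B, hBsub, hBfin, hBbad⟩ := hfcc
  by_cases hnι : Nonempty ι
  case neg =>
    have hempty' : (Set.univ : Set (ClanPt E)) = ∅ := by
      haveI := not_nonempty_iff.mp hnι
      simpa using hempty
    exact ⟨∅, by simpa using hempty'⟩
  -- pick an index for each element of B
  have hchoice : ∀ b ∈ B, ∃ i : ι, b ∈ A i := fun b hb => Set.mem_iUnion.mp (hBsub hb)
  choose! g hg using hchoice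
  refine ⟨(hBfin.toFinset.image g), ?_⟩
  rw [Set.eq_empty_iff_forall_notMem]
  rintro Γ ⟨-, hΓmem⟩
  simp only [Set.mem_iInter] at hΓmem
  refine hBbad Γ.1 Γ.2 fun b hb => ?_
  have hi : g b ∈ hBfin.toFinset.image g :=
    Finset.mem_image.mpr ⟨b, hBfin.mem_toFinset.mpr hb, rfl⟩
  have := hΓmem (g b) hi
  rw [hAZ (g b)] at this
  exact Set.mem_iInter₂.mp this b (hg b hb)

lemma contact_iff (E : EDC D) (a b : D) :
    E.C a b ↔ hset E a ∩ hset E b ≠ ∅ := by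
  constructor
  · intro hC
    obtain ⟨Γ, hΓ, hF0, hG0⟩ := exists_clan E (principalFilter a) (principalFilter b)
      (fun x hx y hy => E.c2 a x b y hC hx hy)
    rw [← Set.nonempty_iff_ne_empty]
    exact ⟨⟨Γ, hΓ⟩, hF0 (le_refl a), hG0 (le_refl b)⟩
  · intro h
    obtain ⟨Γ, ha, hb⟩ := Set.nonempty_iff_ne_empty.mpr h
    exact Γ.2.2.2.2 a b ha hb

lemma dualcontact_iff (E : EDC D)
    (hUcd : ∀ a b : D, ¬ E.Cd a b → ∃ c d : D, a ⊔ c = ⊤ ∧ b ⊔ d = ⊤ ∧ ¬ E.C c d)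
    (a b : D) :
    E.Cd a b ↔ interior (hset E a) ∪ interior (hset E b) ≠ Set.univ := by
  constructor
  · intro hCd
    obtain ⟨Γ, hΓ, hF0, hG0⟩ := exists_clan E (uset_filter a) (uset_filter b)
      (cd_contact E hCd)
    intro huniv
    have : (⟨Γ, hΓ⟩ : ClanPt E) ∈ interior (hset E a) ∪ interior (hset E b) := by
      rw [huniv]; trivial
    rcases this with h | h
    · rw [interior_hset] at h
      obtain ⟨c, hc, hcΓ⟩ := h
      exact hcΓ (hF0 hc)
    · rw [interior_hset] at h
      obtain ⟨c, hc, hcΓ⟩ := h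
      exact hcΓ (hG0 hc)
  · intro h
    by_contra hCd
    obtain ⟨c, d, hc, hd, hCcd⟩ := hUcd a b hCd
    apply h
    rw [Set.eq_univ_iff_forall]
    intro Γ
    by_cases hcΓ : c ∈ Γ.1
    · by_cases hdΓ : d ∈ Γ.1
      · exact absurd (Γ.2.2.2.2 c d hcΓ hdΓ) hCcd
      · exact Or.inr (by rw [interior_hset]; exact ⟨d, hd, hdΓ⟩)
    · exact Or.inl (by rw [interior_hset]; exact ⟨c, hc, hcΓ⟩)

lemma ll_iff (E : EDC D)
    (hUll : ∀ a b : D, E.Ll a b → ∃ c : D, b ⊔ c = ⊤ ∧ ¬ E.C a c)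
    (a b : D) :
    E.Ll a b ↔ hset E a ⊆ interior (hset E b) := by
  constructor
  · intro hLl Γ hΓ
    obtain ⟨c, hc, hC⟩ := hUll a b hLl
    rw [interior_hset]
    refine ⟨c, hc, fun hcΓ => hC (Γ.2.2.2.2 a c hΓ hcΓ)⟩
  · intro h
    by_contra hLl
    obtain ⟨Γ, hΓ, hF0, hG0⟩ := exists_clan E (principalFilter a) (uset_filter b)
      (fun x hx c hc => E.c2 a x c c (nll_contact E hLl c hc) hx le_rfl)
    have := h (show (⟨Γ, hΓ⟩ : ClanPt E) ∈ hset E a from hF0 (le_refl a))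
    rw [interior_hset] at this
    obtain ⟨c, hc, hcΓ⟩ := this
    exact hcΓ (hG0 hc)

end Stmt16Aux

namespace Stmt16Aux

variable {D : Type u} [DistribLattice D] [BoundedOrder D]

lemma finset_interior (E : EDC D) (t : Finset D) :
    interior (hset E (t.inf id)) = ⋂ x ∈ t, interior (hset E x) := by
  classical
  induction t using Finset.induction_on with
  | empty => simp [hset_top]
  | @insert a t ha ih =>
    rw [Finset.inf_insert]
    show interior (hset E (a ⊓ t.inf id)) = _
    rw [← interior_inf, ih, Finset.set_biInter_insert]

lemma regc_subset_inf (E : EDC D)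
    (hExtO : ∀ a b : D, ¬ a ≤ b → ∃ c : D, a ⊔ c = ⊤ ∧ b ⊔ c ≠ ⊤)
    {α : Set (ClanPt E)} (hα : closure (interior α) = α) {t : Finset D}
    (ht : ∀ x ∈ t, α ⊆ hset E x) : α ⊆ hset E (t.inf id) := by
  have h1 : interior α ⊆ interior (hset E (t.inf id)) := by
    rw [finset_interior]
    exact Set.subset_iInter₂ fun x hx => interior_mono (ht x hx)
  calc α = closure (interior α) := hα.symm
    _ ⊆ closure (interior (hset E (t.inf id))) := closure_mono h1
    _ = hset E (t.inf id) := regclosed_hset E hExtO _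

lemma sepC (E : EDC D)
    (hExtO : ∀ a b : D, ¬ a ≤ b → ∃ c : D, a ⊔ c = ⊤ ∧ b ⊔ c ≠ ⊤)
    (α β : Set (ClanPt E)) (hα : closure (interior α) = α)
    (hβ : closure (interior β) = β) (hαβ : α ∩ β = ∅) :
    ∃ a b : D, α ⊆ hset E a ∧ β ⊆ hset E b ∧ hset E a ∩ hset E b = ∅ := by
  classical
  have hαc : IsClosed α := hα ▸ isClosed_closure
  have hβc : IsClosed β := hβ ▸ isClosed_closure
  obtain ⟨A, hA⟩ := (isClosed_iff E).mp hαc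
  obtain ⟨B, hB⟩ := (isClosed_iff E).mp hβc
  have hnoclan : ¬ ∃ Γ : Set D, IsClan E Γ ∧ A ∪ B ⊆ Γ := by
    rintro ⟨Γ, hΓ, hsub⟩
    have h1 : (⟨Γ, hΓ⟩ : ClanPt E) ∈ α := by
      rw [hA]; exact Set.mem_iInter₂.mpr fun a ha => hsub (Or.inl ha)
    have h2 : (⟨Γ, hΓ⟩ : ClanPt E) ∈ β := by
      rw [hB]; exact Set.mem_iInter₂.mpr fun b hb => hsub (Or.inr hb)
    have : (⟨Γ, hΓ⟩ : ClanPt E) ∈ α ∩ β := ⟨h1, h2⟩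
    rw [hαβ] at this
    exact this
  have hfcc : ¬ ∀ B0 : Set D, B0 ⊆ A ∪ B → B0.Finite →
      ∃ Γ : Set D, IsClan E Γ ∧ B0 ⊆ Γ := fun h => hnoclan (exists_clan_of_fcc E h)
  push_neg at hfcc
  obtain ⟨B0, hB0sub, hB0fin, hB0bad⟩ := hfcc
  set s : Finset D := hB0fin.toFinset with hsdef
  set sA : Finset D := s.filter (· ∈ A) with hsAdef
  set sB : Finset D := s.filter (· ∉ A) with hsBdef
  refine ⟨sA.inf id, sB.inf id, ?_, ?_, ?_⟩
  · refine regc_subset_inf E hExtO hα fun x hx => ?_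
    have hxA : x ∈ A := (Finset.mem_filter.mp hx).2
    intro Γ hΓ
    rw [hA] at hΓ
    exact Set.mem_iInter₂.mp hΓ x hxA
  · refine regc_subset_inf E hExtO hβ fun x hx => ?_
    obtain ⟨hxs, hxA⟩ := Finset.mem_filter.mp hx
    have hxB : x ∈ B := (hB0sub (hB0fin.mem_toFinset.mp hxs)).resolve_left hxA
    intro Γ hΓ
    rw [hB] at hΓ
    exact Set.mem_iInter₂.mp hΓ x hxB
  · rw [Set.eq_empty_iff_forall_notMem]
    rintro Γ ⟨hΓa, hΓb⟩
    refine hB0bad Γ.1 Γ.2 fun x hx => ?_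
    have hxs : x ∈ s := hB0fin.mem_toFinset.mpr hx
    by_cases hxA : x ∈ A
    · have hle : sA.inf id ≤ x := Finset.inf_le (Finset.mem_filter.mpr ⟨hxs, hxA⟩)
      exact Γ.2.2.1 _ x hΓa hle
    · have hle : sB.inf id ≤ x := Finset.inf_le (Finset.mem_filter.mpr ⟨hxs, hxA⟩)
      exact Γ.2.2.1 _ x hΓb hle

lemma regc_closure_of_open {X : Type u} [TopologicalSpace X] {U : Set X} (hU : IsOpen U) :
    closure (interior (closure U)) = closure U := by
  apply subset_antisymm
  · have := closure_mono (interior_subset : interior (closure U) ⊆ closure U)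
    rwa [closure_closure] at this
  · exact closure_mono (interior_maximal subset_closure hU)

end Stmt16Aux

/-- topological representation theorem for U-rich EDC-lattices. -/
theorem stmt16 {D : Type u} [DistribLattice D] [BoundedOrder D] (E : EDC D)
    (hExtO : ∀ a b : D, ¬ a ≤ b → ∃ c : D, a ⊔ c = ⊤ ∧ b ⊔ c ≠ ⊤)
    (hUll : ∀ a b : D, E.Ll a b → ∃ c : D, b ⊔ c = ⊤ ∧ ¬ E.C a c)
    (hUcd : ∀ a b : D, ¬ E.Cd a b → ∃ c d : D, a ⊔ c = ⊤ ∧ b ⊔ d = ⊤ ∧ ¬ E.C c d) :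
    ∃ (X : Type u) (_ : TopologicalSpace X) (h : D → Set X),
      CompactSpace X ∧ T0Space X ∧
      (∀ F : Set X, IsClosed F →
        ∃ S : Set (Set X), (∀ s ∈ S, closure (interior s) = s) ∧ F = ⋂₀ S) ∧
      (∀ a : D, closure (interior (h a)) = h a) ∧
      Function.Injective h ∧
      h ⊥ = ∅ ∧ h ⊤ = Set.univ ∧
      (∀ a b : D, h (a ⊔ b) = h a ∪ h b) ∧
      (∀ a b : D, h (a ⊓ b) = closure (interior (h a ∩ h b))) ∧
      (∀ a b : D, a ≤ b ↔ h a ⊆ h b) ∧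
      (∀ a b : D, E.C a b ↔ h a ∩ h b ≠ ∅) ∧
      (∀ a b : D, E.Cd a b ↔ interior (h a) ∪ interior (h b) ≠ Set.univ) ∧
      (∀ a b : D, E.Ll a b ↔ h a ⊆ interior (h b)) ∧
      (∀ α : Set X, closure (interior α) = α → α ≠ Set.univ →
        ∃ a : D, α ⊆ h a ∧ h a ≠ Set.univ) ∧
      (∀ α β : Set X, closure (interior α) = α → closure (interior β) = β →
        α ∩ β = ∅ → ∃ a b : D, α ⊆ h a ∧ β ⊆ h b ∧ h a ∩ h b = ∅) ∧
      (∀ α β : Set X, closure (interior α) = α → closure (interior β) = β →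
        closure αᶜ ∩ closure βᶜ = ∅ →
        ∃ a b : D, α ∪ h a = Set.univ ∧ β ∪ h b = Set.univ ∧ h a ∩ h b = ∅) ∧
      (∀ α β : Set X, closure (interior α) = α → closure (interior β) = β →
        α ⊆ interior β →
        ∃ a b : D, α ⊆ h a ∧ β ∪ h b = Set.univ ∧ h a ∩ h b = ∅) := by
  classical
  open Stmt16Aux in
  refine ⟨ClanPt E, inferInstance, hset E, inferInstance, inferInstance,
    ?_, fun a => regclosed_hset E hExtO a, hset_injective E, hset_bot E, hset_top E,
    hset_sup E, fun a b => hset_inf E hExtO a b, hset_le_iff E, contact_iff E,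
    dualcontact_iff E hUcd, ll_iff E hUll, ?_, sepC E hExtO, ?_, ?_⟩
  · -- semiregularity
    intro F hF
    obtain ⟨A, hA⟩ := (isClosed_iff E).mp hF
    refine ⟨hset E '' A, ?_, ?_⟩
    · rintro s ⟨a, ha, rfl⟩
      exact regclosed_hset E hExtO a
    · rw [hA, Set.sInter_image]
  · -- dual density
    intro α hα hne
    have hαc : IsClosed α := hα ▸ isClosed_closure
    obtain ⟨A, hA⟩ := (isClosed_iff E).mp hαc
    by_cases hex : ∃ a ∈ A, hset E a ≠ Set.univ
    · obtain ⟨a, ha, hne'⟩ := hex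
      refine ⟨a, ?_, hne'⟩
      intro Γ hΓ
      rw [hA] at hΓ
      exact Set.mem_iInter₂.mp hΓ a ha
    · push_neg at hex
      exfalso
      apply hne
      rw [hA]
      apply Set.eq_univ_of_forall
      intro Γ
      exact Set.mem_iInter₂.mpr fun a ha => by rw [hex a ha]; trivial
  · -- Cd-separation
    intro α β hα hβ hsep
    have hαc : IsClosed α := hα ▸ isClosed_closure
    have hβc : IsClosed β := hβ ▸ isClosed_closure
    obtain ⟨a, b, h2, h3, h4⟩ := sepC E hExtO (closure αᶜ) (closure βᶜ)
      (regc_closure_of_open hαc.isOpen_compl) (regc_closure_of_open hβc.isOpen_compl) hsep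
    refine ⟨a, b, ?_, ?_, h4⟩
    · apply Set.eq_univ_of_forall
      intro Γ
      by_cases hΓ : Γ ∈ α
      · exact Or.inl hΓ
      · exact Or.inr (h2 (subset_closure hΓ))
    · apply Set.eq_univ_of_forall
      intro Γ
      by_cases hΓ : Γ ∈ β
      · exact Or.inl hΓ
      · exact Or.inr (h3 (subset_closure hΓ))
  · -- Ll-separation
    intro α β hα hβ hsub
    have hβc : IsClosed β := hβ ▸ isClosed_closure
    have hdisj : α ∩ closure βᶜ = ∅ := by
      rw [Set.eq_empty_iff_forall_notMem]
      rintro Γ ⟨h1', h2'⟩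
      rw [closure_compl] at h2'
      exact h2' (hsub h1')
    obtain ⟨a, b, ha, hb, hab⟩ := sepC E hExtO α (closure βᶜ) hα
      (regc_closure_of_open hβc.isOpen_compl) hdisj
    refine ⟨a, b, ha, ?_, hab⟩
    apply Set.eq_univ_of_forall
    intro Γ
    by_cases hΓ : Γ ∈ β
    · exact Or.inl hΓ
    · exact Or.inr (hb (subset_closure hΓ))
end

section
/- Topological representation theorem for C-extensional U-rich EDC-lattices: Let D be an EDC-lattice satisfying (Ext Ô): a ≰ b → ∃c, a + c = 1 and b + c ≠ 1; (U-rich ≪): a ≪ b → ∃c, b + c = 1 and ¬(a C c); (U-rich Ĉ): ¬(a Ĉ b) → ∃c ∃d, a + c = 1, b + d = 1 and ¬(c C d); and (Ext C): a ≠ 1 → ∃b ≠ 0, ¬(a C b). Then there exist a topological space X which is compact, T1, semiregular (every closed subset of X is an intersection of regular closed sets) and weakly regular (for every nonempty open set a ⊆ X there is a nonempty open set b with Cl(b) ⊆ a), and a map h : D → (subsets of X) such that: every h(a) is regular closed; h is injective; h(0) = ∅, h(1) = X; h(a+b) = h(a) ∪ h(b); h(a·b) = Cl(Int(h(a) ∩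 h(b))); a ≤ b iff h(a) ⊆ h(b); a C b iff h(a) ∩ h(b) ≠ ∅; a Ĉ b iff Int(h(a)) ∪ Int(h(b)) ≠ X; a ≪ b iff h(a) ⊆ Int(h(b)); and h is dually dense: for every regular closed α ≠ X there exists a ∈ D with α ⊆ h(a) and h(a) ≠ X. -/
universe u

namespace Stmt17Aux

open Set

variable {D : Type u} [DistribLattice D] [BoundedOrder D]

/-- A clan: upward closed, prime, contains ⊤, omits ⊥, pairwise in contact. -/
def IsClan (E : EDC D) (Γ : Set D) : Prop :=
  ⊤ ∈ Γ ∧ ⊥ ∉ Γ ∧ (∀ x y, x ∈ Γ → x ≤ y → y ∈ Γ) ∧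
    (∀ x y, x ⊔ y ∈ Γ → x ∈ Γ ∨ y ∈ Γ) ∧ ∀ x y, x ∈ Γ → y ∈ Γ → E.C x y

theorem clan_of_primeFilter {E : EDC D} {F : Set D} (hF : PrimeFilter F) : IsClan E F := by
  obtain ⟨⟨htop, hup, hmeet⟩, hbot, hprime⟩ := hF
  refine ⟨htop, hbot, hup, hprime, fun x y hx hy => E.c5 x y ?_⟩
  intro h
  exact hbot (h ▸ hmeet x y hx hy)

/-- Master Zorn lemma: maximal filters all of whose elements satisfy a
sup-splitting monotone predicate are prime. -/
theorem exists_primeFilter (Q : D → Prop) (hmono : ∀ {x y : D}, x ≤ y → Q x → Q y)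
    (hsup : ∀ {x y : D}, Q (x ⊔ y) → Q x ∨ Q y) (hbot : ¬ Q ⊥) (a : D) (hQa : Q a) :
    ∃ F : Set D, PrimeFilter F ∧ a ∈ F ∧ ∀ x ∈ F, Q x := by
  set S : Set (Set D) := {F | EDCFilter F ∧ a ∈ F ∧ ∀ x ∈ F, Q x} with hS
  have h0 : {x : D | a ≤ x} ∈ S := by
    refine ⟨⟨le_top, fun x y hx hxy => hx.trans hxy, fun x y hx hy => le_inf hx hy⟩,
      le_rfl, fun x hx => hmono hx hQa⟩
  obtain ⟨F, haF, hFS, hFmax⟩ : ∃ F, {x : D | a ≤ x} ⊆ F ∧ F ∈ S ∧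
      ∀ G ∈ S, F ⊆ G → G ⊆ F := by
    obtain ⟨m, hm, hmax⟩ := zorn_subset_nonempty S (fun c hcS hchain hcne => by
      refine ⟨⋃₀ c, ⟨⟨?_, ?_, ?_⟩, ?_, ?_⟩, fun s hs => subset_sUnion_of_mem hs⟩
      · obtain ⟨t, ht⟩ := hcne
        exact ⟨t, ht, (hcS ht).1.1⟩
      · rintro x y ⟨t, ht, hx⟩ hxy
        exact ⟨t, ht, (hcS ht).1.2.1 x y hx hxy⟩
      · rintro x y ⟨t, ht, hx⟩ ⟨s, hs, hy⟩
        rcases hchain.total ht hs with h | h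
        · exact ⟨s, hs, (hcS hs).1.2.2 x y (h hx) hy⟩
        · exact ⟨t, ht, (hcS ht).1.2.2 x y hx (h hy)⟩
      · obtain ⟨t, ht⟩ := hcne
        exact ⟨t, ht, (hcS ht).2.1⟩
      · rintro x ⟨t, ht, hx⟩
        exact (hcS ht).2.2 x hx) _ h0
    exact ⟨m, hm, hmax.1, fun G hG hmG => hmax.2 hG hmG⟩
  obtain ⟨⟨htop, hupF, hmeetF⟩, haF', hQF⟩ := hFS
  have hbotF : ⊥ ∉ F := fun h => hbot (hQF ⊥ h)
  refine ⟨F, ⟨⟨htop, hupF, hmeetF⟩, hbotF, ?_⟩, haF', hQF⟩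
  intro x y hxy
  by_contra hcon
  push_neg at hcon
  obtain ⟨hx, hy⟩ := hcon
  -- the filter generated by F and z
  have key : ∀ z : D, z ∉ F → x ⊔ y ∈ F → ∃ f ∈ F, ¬ Q (f ⊓ z) := by
    intro z hz _
    set Fz : Set D := {w | ∃ f ∈ F, f ⊓ z ≤ w} with hFz
    have hFsub : F ⊆ Fz := fun f hf => ⟨f, hf, inf_le_left⟩
    have hzF : z ∈ Fz := ⟨⊤, htop, by simp⟩
    have hFzfilt : EDCFilter Fz := by
      refine ⟨hFsub htop, ?_, ?_⟩
      · rintro u v ⟨f, hf, hfu⟩ huv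
        exact ⟨f, hf, hfu.trans huv⟩
      · rintro u v ⟨f, hf, hfu⟩ ⟨g, hg, hgv⟩
        refine ⟨f ⊓ g, hmeetF f g hf hg, le_inf ?_ ?_⟩
        · exact le_trans (inf_le_inf_right z inf_le_left) hfu
        · exact le_trans (inf_le_inf_right z inf_le_right) hgv
    by_contra hno
    push_neg at hno
    have hFzS : Fz ∈ S := by
      refine ⟨hFzfilt, hFsub haF', ?_⟩
      rintro w ⟨f, hf, hfw⟩
      exact hmono hfw (hno f hf)
    exact hz (hFmax Fz hFzS hFsub hzF)
  obtain ⟨f₁, hf₁, hQ₁⟩ := key x hx hxy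
  obtain ⟨f₂, hf₂, hQ₂⟩ := key y hy hxy
  set f := f₁ ⊓ f₂ with hf
  have hfF : f ∈ F := hmeetF _ _ hf₁ hf₂
  have hQf : Q (f ⊓ (x ⊔ y)) := hQF _ (hmeetF _ _ hfF hxy)
  rw [inf_sup_left] at hQf
  rcases hsup hQf with h | h
  · exact hQ₁ (hmono (inf_le_inf_right x inf_le_left) h)
  · exact hQ₂ (hmono (inf_le_inf_right y inf_le_right) h)

end Stmt17Aux

namespace Stmt17Aux

open Set

variable {D : Type u} [DistribLattice D] [BoundedOrder D] {E : EDC D}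

omit [DistribLattice D] [BoundedOrder D] in
theorem finset_subset_chain {c : Set (Set D)} (hchain : IsChain (· ⊆ ·) c)
    (hcne : c.Nonempty) : ∀ S : Finset D, ↑S ⊆ ⋃₀ c → ∃ t ∈ c, ↑S ⊆ t := by
  classical
  intro S
  induction S using Finset.induction with
  | empty => exact fun _ => hcne.imp fun t ht => ⟨ht, by simp⟩
  | @insert x S hx ih =>
    intro hS
    obtain ⟨t₁, ht₁, hSt₁⟩ := ih (by
      intro y hy
      exact hS (by rw [Finset.coe_insert]; exact Set.mem_insert_iff.2 (Or.inr hy)))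
    obtain ⟨t₂, ht₂, hxt₂⟩ : ∃ t₂ ∈ c, x ∈ t₂ := hS (by simp)
    have key : ∀ t ∈ c, x ∈ t → ↑S ⊆ t → ↑(insert x S) ⊆ t := by
      intro t _ hxt hSt y hy
      rw [Finset.coe_insert] at hy
      rcases hy with rfl | hy
      · exact hxt
      · exact hSt hy
    rcases hchain.total ht₁ ht₂ with h | h
    · exact ⟨t₂, ht₂, key t₂ ht₂ hxt₂ (hSt₁.trans h)⟩
    · exact ⟨t₁, ht₁, key t₁ ht₁ (h hxt₂) hSt₁⟩

/-- Separation: a ≰ b gives a clan containing a and omitting b. -/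
theorem exists_clan_sep {a b : D} (hab : ¬ a ≤ b) :
    ∃ Γ : Set D, IsClan E Γ ∧ a ∈ Γ ∧ b ∉ Γ := by
  obtain ⟨F, hF, haF, hQF⟩ := exists_primeFilter (fun z : D => ¬ z ≤ b)
    (fun hxy h hle => h (hxy.trans hle)) (fun {x y} h => by
      by_cases hx : x ≤ b
      · by_cases hy : y ≤ b
        · exact absurd (sup_le hx hy) h
        · exact Or.inr hy
      · exact Or.inl hx) (by simp) a hab
  exact ⟨F, clan_of_primeFilter hF, haF, fun hb => hQF b hb le_rfl⟩

/-- Contact witnesses: aCb gives a clan containing a and b. -/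
theorem exists_clan_pair {a b : D} (hab : E.C a b) :
    ∃ Γ : Set D, IsClan E Γ ∧ a ∈ Γ ∧ b ∈ Γ := by
  obtain ⟨F, hF, haF, hQF⟩ := exists_primeFilter (fun z => E.C z b)
    (fun hxy h => E.c2 _ _ _ _ h hxy le_rfl)
    (fun {x y} h => E.c3 _ _ _ (E.c4 _ _ h) |>.imp (E.c4 _ _) (E.c4 _ _))
    (fun h => (E.c1 _ _ h).1 rfl) a hab
  obtain ⟨G, hG, hbG, hQG⟩ := exists_primeFilter (fun z => ∀ x ∈ F, E.C x z)
    (fun hxy h x hx => E.c2 _ _ _ _ (h x hx) le_rfl hxy)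
    (fun {x y} h => by
      by_cases h1 : ∀ x' ∈ F, E.C x' x
      · exact Or.inl h1
      by_cases h2 : ∀ x' ∈ F, E.C x' y
      · exact Or.inr h2
      exfalso
      push_neg at h1 h2
      obtain ⟨x₁, hx₁, hc₁⟩ := h1
      obtain ⟨x₂, hx₂, hc₂⟩ := h2
      have hx₀ : x₁ ⊓ x₂ ∈ F := hF.1.2.2 _ _ hx₁ hx₂
      rcases E.c3 _ _ _ (h _ hx₀) with h' | h'
      · exact hc₁ (E.c2 _ _ _ _ h' inf_le_left le_rfl)
      · exact hc₂ (E.c2 _ _ _ _ h' inf_le_right le_rfl))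
    (fun h => (E.c1 _ _ (h ⊤ hF.1.1)).2 rfl) b (fun x hx => hQF x hx)
  refine ⟨F ∪ G, ⟨Or.inl hF.1.1, ?_, ?_, ?_, ?_⟩, Or.inl haF, Or.inr hbG⟩
  · rintro (h | h)
    · exact hF.2.1 h
    · exact hG.2.1 h
  · rintro x y (hx | hx) hxy
    · exact Or.inl (hF.1.2.1 x y hx hxy)
    · exact Or.inr (hG.1.2.1 x y hx hxy)
  · rintro x y (hxy | hxy)
    · exact (hF.2.2 x y hxy).imp Or.inl Or.inl
    · exact (hG.2.2 x y hxy).imp Or.inr Or.inr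
  · rintro x y (hx | hx) (hy | hy)
    · refine E.c5 x y fun h => hF.2.1 (h ▸ hF.1.2.2 x y hx hy)
    · exact hQG y hy x hx
    · exact E.c4 _ _ (hQG x hx y hy)
    · refine E.c5 x y fun h => hG.2.1 (h ▸ hG.1.2.2 x y hx hy)

/-- Every clan extends to a maximal clan. -/
theorem exists_maxClan {Γ : Set D} (hΓ : IsClan E Γ) :
    ∃ Δ : Set D, Γ ⊆ Δ ∧ IsClan E Δ ∧ ∀ Θ, IsClan E Θ → Δ ⊆ Θ → Θ = Δ := by
  obtain ⟨m, hm, hmax⟩ := zorn_subset_nonempty {Δ : Set D | IsClan E Δ}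
    (fun c hcS hchain hcne => by
      refine ⟨⋃₀ c, ⟨?_, ?_, ?_, ?_, ?_⟩, fun s hs => subset_sUnion_of_mem hs⟩
      · obtain ⟨t, ht⟩ := hcne; exact ⟨t, ht, (hcS ht).1⟩
      · rintro ⟨t, ht, hbot⟩; exact (hcS ht).2.1 hbot
      · rintro x y ⟨t, ht, hx⟩ hxy; exact ⟨t, ht, (hcS ht).2.2.1 x y hx hxy⟩
      · rintro x y ⟨t, ht, hxy⟩
        exact ((hcS ht).2.2.2.1 x y hxy).imp (fun h => ⟨t, ht, h⟩) (fun h => ⟨t, ht, h⟩)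
      · rintro x y ⟨t, ht, hx⟩ ⟨s, hs, hy⟩
        rcases hchain.total ht hs with h | h
        · exact (hcS hs).2.2.2.2 x y (h hx) hy
        · exact (hcS ht).2.2.2.2 x y hx (h hy)) Γ hΓ
  exact ⟨m, hm, hmax.1, fun Θ hΘ hmΘ => subset_antisymm (hmax.2 hΘ hmΘ) hmΘ⟩

/-- Finite clan property: if every finite subset of M lies in a clan, M lies in a clan. -/
theorem exists_clan_superset {M : Set D}
    (hM : ∀ S : Finset D, ↑S ⊆ M → ∃ Γ : Set D, IsClan E Γ ∧ ↑S ⊆ Γ) :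
    ∃ Γ : Set D, IsClan E Γ ∧ M ⊆ Γ := by
  classical
  set P : Set (Set D) := {N | M ⊆ N ∧ ∀ S : Finset D, ↑S ⊆ N → ∃ Γ : Set D, IsClan E Γ ∧ ↑S ⊆ Γ}
    with hP
  have hMP : M ∈ P := ⟨le_rfl, hM⟩
  obtain ⟨N, hMN, hNP, hNmax⟩ : ∃ N, M ⊆ N ∧ N ∈ P ∧ ∀ N' ∈ P, N ⊆ N' → N' ⊆ N := by
    obtain ⟨m, hm, hmax⟩ := zorn_subset_nonempty P (fun c hcS hchain hcne => by
      refine ⟨⋃₀ c, ⟨?_, ?_⟩, fun s hs => subset_sUnion_of_mem hs⟩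
      · obtain ⟨t, ht⟩ := hcne
        exact le_trans (hcS ht).1 (subset_sUnion_of_mem ht)
      · intro S hS
        obtain ⟨t, ht, hSt⟩ := finset_subset_chain hchain hcne S hS
        exact (hcS ht).2 S hSt) M hMP
    exact ⟨m, hm, hmax.1, fun G hG hmG => hmax.2 hG hmG⟩
  obtain ⟨hMN', hNfcp⟩ := hNP
  -- auxiliary: an element can be added iff its addition keeps the finite clan property;
  -- by maximality it is then already in N
  have hadd : ∀ z : D, (∀ S : Finset D, ↑S ⊆ N → ∃ Γ : Set D,
      IsClan E Γ ∧ ↑S ⊆ Γ ∧ z ∈ Γ) → z ∈ N := by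
    intro z hz
    have hins : insert z N ∈ P := by
      refine ⟨hMN'.trans (subset_insert _ _), fun S hS => ?_⟩
      obtain ⟨Γ, hΓ, hSΓ, hzΓ⟩ := hz (S.erase z) (by
        intro y hy
        simp only [Finset.coe_erase, Set.mem_diff, Set.mem_singleton_iff] at hy
        rcases hS hy.1 with h | h
        · exact absurd h hy.2
        · exact h)
      refine ⟨Γ, hΓ, fun y hy => ?_⟩
      by_cases hyz : y = z
      · exact hyz ▸ hzΓ
      · exact hSΓ (by
          simp only [Finset.coe_erase, Set.mem_diff, Set.mem_singleton_iff]
          exact ⟨hy, hyz⟩)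
    exact hNmax _ hins (subset_insert _ _) (mem_insert _ _)
  -- characterisation of non-addable elements
  have hnonadd : ∀ z : D, z ∉ N → ∃ S : Finset D, ↑S ⊆ N ∧
      ∀ Γ : Set D, IsClan E Γ → ↑S ⊆ Γ → z ∉ Γ := by
    intro z hz
    by_contra hno
    push_neg at hno
    refine hz (hadd z fun S hS => ?_)
    obtain ⟨Γ, hΓ, hSΓ, hzΓ⟩ := hno S hS
    exact ⟨Γ, hΓ, hSΓ, hzΓ⟩
  refine ⟨N, ⟨?_, ?_, ?_, ?_, ?_⟩, hMN⟩
  · exact hadd ⊤ (fun S hS => (hNfcp S hS).imp fun Γ ⟨hΓ, hSΓ⟩ => ⟨hΓ, hSΓ, hΓ.1⟩)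
  · intro hbot
    obtain ⟨Γ, hΓ, hSΓ⟩ := hNfcp {⊥} (by simpa using hbot)
    exact hΓ.2.1 (hSΓ (by simp))
  · intro x y hx hxy
    refine hadd y fun S hS => ?_
    obtain ⟨Γ, hΓ, hSΓ⟩ := hNfcp (insert x S) (by
      rw [Finset.coe_insert]
      exact Set.insert_subset hx hS)
    refine ⟨Γ, hΓ, fun w hw => hSΓ ?_, hΓ.2.2.1 x y (hSΓ (by simp)) hxy⟩
    rw [Finset.coe_insert]
    exact Set.mem_insert_iff.2 (Or.inr hw)
  · intro x y hxy
    by_contra hc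
    push_neg at hc
    obtain ⟨hx, hy⟩ := hc
    obtain ⟨S₁, hS₁, hS₁x⟩ := hnonadd x hx
    obtain ⟨S₂, hS₂, hS₂y⟩ := hnonadd y hy
    obtain ⟨Γ, hΓ, hSΓ⟩ := hNfcp (insert (x ⊔ y) (S₁ ∪ S₂)) (by
      rw [Finset.coe_insert, Finset.coe_union]
      exact Set.insert_subset hxy (Set.union_subset hS₁ hS₂))
    have hsub₁ : ↑S₁ ⊆ Γ := fun w hw => hSΓ (by
      rw [Finset.coe_insert, Finset.coe_union]
      exact Set.mem_insert_iff.2 (Or.inr (Or.inl hw)))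
    have hsub₂ : ↑S₂ ⊆ Γ := fun w hw => hSΓ (by
      rw [Finset.coe_insert, Finset.coe_union]
      exact Set.mem_insert_iff.2 (Or.inr (Or.inr hw)))
    have hxyΓ : x ⊔ y ∈ Γ := hSΓ (by simp)
    rcases hΓ.2.2.2.1 x y hxyΓ with h | h
    · exact hS₁x Γ hΓ hsub₁ h
    · exact hS₂y Γ hΓ hsub₂ h
  · intro x y hx hy
    obtain ⟨Γ, hΓ, hSΓ⟩ := hNfcp {x, y} (by
      intro w hw
      simp only [Finset.coe_insert, Finset.coe_singleton, Set.mem_insert_iff,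
        Set.mem_singleton_iff] at hw
      rcases hw with rfl | rfl
      · exact hx
      · exact hy)
    exact hΓ.2.2.2.2 x y (hSΓ (by simp)) (hSΓ (by simp))

end Stmt17Aux

namespace Stmt17Aux

open Set TopologicalSpace

variable {D : Type u} [DistribLattice D] [BoundedOrder D]

/-- The points of the representation space: maximal clans. -/
def Pt (E : EDC D) : Type u :=
  {Γ : Set D // IsClan E Γ ∧ ∀ Θ, IsClan E Θ → Γ ⊆ Θ → Θ = Γ}

/-- The representation map. -/
def hmap (E : EDC D) (a : D) : Set (Pt E) := {Γ | a ∈ Γ.1}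

instance ptTop (E : EDC D) : TopologicalSpace (Pt E) :=
  generateFrom {U | ∃ c : D, U = (hmap E c)ᶜ}

variable {E : EDC D}

theorem mem_hmap {a : D} {Γ : Pt E} : Γ ∈ hmap E a ↔ a ∈ Γ.1 := Iff.rfl

theorem hmap_top : hmap E ⊤ = (univ : Set (Pt E)) :=
  eq_univ_of_forall fun Γ => Γ.2.1.1

theorem hmap_bot : hmap E ⊥ = (∅ : Set (Pt E)) :=
  eq_empty_iff_forall_notMem.2 fun Γ h => Γ.2.1.2.1 h

theorem sup_mem_clan_iff {Γ : Set D} (hΓ : IsClan E Γ) {x y : D} :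
    x ⊔ y ∈ Γ ↔ x ∈ Γ ∨ y ∈ Γ := by
  constructor
  · exact hΓ.2.2.2.1 x y
  · rintro (h | h)
    · exact hΓ.2.2.1 x _ h le_sup_left
    · exact hΓ.2.2.1 y _ h le_sup_right

theorem hmap_sup {a b : D} : hmap E (a ⊔ b) = hmap E a ∪ hmap E b := by
  ext Γ
  exact sup_mem_clan_iff Γ.2.1

theorem hmap_mono {a b : D} (hab : a ≤ b) : hmap E a ⊆ hmap E b :=
  fun Γ h => Γ.2.1.2.2.1 a b h hab

theorem isOpen_iff_basic {U : Set (Pt E)} :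
    IsOpen U ↔ ∀ Γ ∈ U, ∃ c : D, c ∉ Γ.1 ∧ (hmap E c)ᶜ ⊆ U := by
  constructor
  · intro h
    have h' : GenerateOpen {U | ∃ c : D, U = (hmap E c)ᶜ} U := h
    clear h
    induction h' with
    | basic s hs =>
      obtain ⟨c, rfl⟩ := hs
      exact fun Γ hΓ => ⟨c, hΓ, le_rfl⟩
    | univ => exact fun Γ _ => ⟨⊥, Γ.2.1.2.1, fun _ _ => mem_univ _⟩
    | inter s t _ _ ihs iht =>
      rintro Γ ⟨hΓs, hΓt⟩
      obtain ⟨c, hc, hcs⟩ := ihs Γ hΓs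
      obtain ⟨d, hd, hdt⟩ := iht Γ hΓt
      refine ⟨c ⊔ d, fun h => ?_, fun Δ hΔ => ⟨hcs fun h => hΔ ?_, hdt fun h => hΔ ?_⟩⟩
      · rcases Γ.2.1.2.2.2.1 c d h with h | h
        · exact hc h
        · exact hd h
      · exact (sup_mem_clan_iff Δ.2.1).2 (Or.inl h)
      · exact (sup_mem_clan_iff Δ.2.1).2 (Or.inr h)
    | sUnion S _ ih =>
      rintro Γ ⟨s, hs, hΓs⟩
      obtain ⟨c, hc, hcs⟩ := ih s hs Γ hΓs
      exact ⟨c, hc, hcs.trans (subset_sUnion_of_mem hs)⟩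
  · intro h
    have : U = ⋃₀ {V | (∃ c : D, V = (hmap E c)ᶜ) ∧ V ⊆ U} := by
      apply subset_antisymm
      · intro Γ hΓ
        obtain ⟨c, hc, hsub⟩ := h Γ hΓ
        exact ⟨(hmap E c)ᶜ, ⟨⟨c, rfl⟩, hsub⟩, hc⟩
      · rintro Γ ⟨V, ⟨_, hVU⟩, hΓV⟩
        exact hVU hΓV
    rw [this]
    exact GenerateOpen.sUnion _ fun s hs => GenerateOpen.basic s hs.1

theorem isClosed_hmap {a : D} : IsClosed (hmap E a) := by
  rw [← isOpen_compl_iff]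
  exact GenerateOpen.basic _ ⟨a, rfl⟩

theorem mem_closure_iff_basic {S : Set (Pt E)} {Γ : Pt E} :
    Γ ∈ closure S ↔ ∀ c : D, S ⊆ hmap E c → c ∈ Γ.1 := by
  constructor
  · intro h c hSc
    exact closure_minimal hSc isClosed_hmap h
  · intro h
    by_contra hΓ
    obtain ⟨c, hc, hsub⟩ := isOpen_iff_basic.1 (isClosed_closure (s := S)).isOpen_compl Γ hΓ
    exact hc (h c fun Δ hΔ => by
      by_contra hcΔ
      exact hsub hcΔ (subset_closure hΔ))

theorem mem_interior_iff_basic {S : Set (Pt E)} {Γ : Pt E} :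
    Γ ∈ interior S ↔ ∃ c : D, c ∉ Γ.1 ∧ (hmap E c)ᶜ ⊆ S := by
  constructor
  · intro h
    obtain ⟨t, hts, hto, hΓt⟩ := mem_interior.1 h
    obtain ⟨c, hc, hsub⟩ := isOpen_iff_basic.1 hto Γ hΓt
    exact ⟨c, hc, hsub.trans hts⟩
  · rintro ⟨c, hc, hsub⟩
    exact mem_interior.2 ⟨(hmap E c)ᶜ, hsub, GenerateOpen.basic _ ⟨c, rfl⟩, hc⟩

end Stmt17Aux

namespace Stmt17Aux

open Set TopologicalSpace

variable {D : Type u} [DistribLattice D] [BoundedOrder D] {E : EDC D}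

theorem exists_pt_mem {a : D} (ha : a ≠ ⊥) : ∃ Γ : Pt E, a ∈ Γ.1 := by
  obtain ⟨Γ₀, hΓ₀, haΓ₀, -⟩ := exists_clan_sep (E := E) (a := a) (b := ⊥)
    (fun h => ha (le_bot_iff.1 h))
  obtain ⟨Δ, hsub, hΔ, hmax⟩ := exists_maxClan hΓ₀
  exact ⟨⟨Δ, hΔ, hmax⟩, hsub haΓ₀⟩

theorem exists_pt_pair {a b : D} (hab : E.C a b) : ∃ Γ : Pt E, a ∈ Γ.1 ∧ b ∈ Γ.1 := by
  obtain ⟨Γ₀, hΓ₀, haΓ₀, hbΓ₀⟩ := exists_clan_pair hab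
  obtain ⟨Δ, hsub, hΔ, hmax⟩ := exists_maxClan hΓ₀
  exact ⟨⟨Δ, hΔ, hmax⟩, hsub haΓ₀, hsub hbΓ₀⟩

variable (hExtC : ∀ a : D, a ≠ ⊤ → ∃ b : D, b ≠ ⊥ ∧ ¬ E.C a b)

include hExtC

theorem exists_pt_avoid {x : D} (hx : x ≠ ⊤) : ∃ Γ : Pt E, x ∉ Γ.1 := by
  obtain ⟨b, hb, hnc⟩ := hExtC x hx
  obtain ⟨Γ, hbΓ⟩ := exists_pt_mem (E := E) hb
  exact ⟨Γ, fun hxΓ => hnc (Γ.2.1.2.2.2.2 x b hxΓ hbΓ)⟩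

theorem compl_subset_hmap {b c : D} : (hmap E c)ᶜ ⊆ hmap E b ↔ b ⊔ c = ⊤ := by
  constructor
  · intro h
    by_contra hne
    obtain ⟨Γ, hΓ⟩ := exists_pt_avoid hExtC hne
    have hbΓ : b ∉ Γ.1 := fun hb => hΓ (Γ.2.1.2.2.1 b _ hb le_sup_left)
    have hcΓ : c ∉ Γ.1 := fun hc => hΓ (Γ.2.1.2.2.1 c _ hc le_sup_right)
    exact hbΓ (h hcΓ)
  · intro h Γ hΓ
    rcases Γ.2.1.2.2.2.1 b c (by rw [h]; exact Γ.2.1.1) with hb | hc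
    · exact hb
    · exact absurd hc hΓ

theorem mem_interior_hmap {b : D} {Γ : Pt E} :
    Γ ∈ interior (hmap E b) ↔ ∃ c : D, c ∉ Γ.1 ∧ b ⊔ c = ⊤ := by
  rw [mem_interior_iff_basic]
  exact exists_congr fun c => and_congr_right fun _ => compl_subset_hmap hExtC

theorem mem_interior_hmap_inter {a b : D} {Γ : Pt E} :
    Γ ∈ interior (hmap E a ∩ hmap E b) ↔
      ∃ c : D, c ∉ Γ.1 ∧ a ⊔ c = ⊤ ∧ b ⊔ c = ⊤ := by
  rw [mem_interior_iff_basic]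
  refine exists_congr fun c => and_congr_right fun _ => ?_
  rw [subset_inter_iff, compl_subset_hmap hExtC, compl_subset_hmap hExtC]

variable (hExtO : ∀ a b : D, ¬ a ≤ b → ∃ c : D, a ⊔ c = ⊤ ∧ b ⊔ c ≠ ⊤)

include hExtO

theorem exists_pt_sep {a b : D} (hab : ¬ a ≤ b) : ∃ Γ : Pt E, a ∈ Γ.1 ∧ b ∉ Γ.1 := by
  obtain ⟨e, hae, hbe⟩ := hExtO a b hab
  obtain ⟨Γ, hΓ⟩ := exists_pt_avoid hExtC hbe
  have hbΓ : b ∉ Γ.1 := fun hb => hΓ (Γ.2.1.2.2.1 b _ hb le_sup_left)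
  have heΓ : e ∉ Γ.1 := fun he => hΓ (Γ.2.1.2.2.1 e _ he le_sup_right)
  rcases Γ.2.1.2.2.2.1 a e (by rw [hae]; exact Γ.2.1.1) with ha | he
  · exact ⟨Γ, ha, hbΓ⟩
  · exact absurd he heΓ

theorem hmap_le_iff {a b : D} : a ≤ b ↔ hmap E a ⊆ hmap E b := by
  constructor
  · exact hmap_mono
  · intro h
    by_contra hab
    obtain ⟨Γ, haΓ, hbΓ⟩ := exists_pt_sep hExtC hExtO hab
    exact hbΓ (h haΓ)

theorem regclosed_hmap {a : D} : closure (interior (hmap E a)) = hmap E a := by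
  apply subset_antisymm (closure_minimal interior_subset isClosed_hmap)
  intro Γ haΓ
  rw [mem_closure_iff_basic]
  intro c hc
  by_contra hcΓ
  have hac : ¬ a ≤ c := fun h => hcΓ (Γ.2.1.2.2.1 a c haΓ h)
  obtain ⟨e, hae, hce⟩ := hExtO a c hac
  obtain ⟨Δ, hΔ⟩ := exists_pt_avoid hExtC hce
  have hcΔ : c ∉ Δ.1 := fun h => hΔ (Δ.2.1.2.2.1 c _ h le_sup_left)
  have heΔ : e ∉ Δ.1 := fun h => hΔ (Δ.2.1.2.2.1 e _ h le_sup_right)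
  exact hcΔ (hc ((mem_interior_hmap hExtC).2 ⟨e, heΔ, hae⟩))

theorem hmap_inf {a b : D} :
    hmap E (a ⊓ b) = closure (interior (hmap E a ∩ hmap E b)) := by
  apply subset_antisymm
  · intro Γ hΓ
    rw [mem_closure_iff_basic]
    intro c hc
    by_contra hcΓ
    have hac : ¬ a ⊓ b ≤ c := fun h => hcΓ (Γ.2.1.2.2.1 _ c hΓ h)
    obtain ⟨e, hae, hce⟩ := hExtO _ c hac
    have hae' : a ⊔ e = ⊤ := top_le_iff.1 (hae ▸ sup_le_sup_right inf_le_left e)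
    have hbe' : b ⊔ e = ⊤ := top_le_iff.1 (hae ▸ sup_le_sup_right inf_le_right e)
    obtain ⟨Δ, hΔ⟩ := exists_pt_avoid hExtC hce
    have hcΔ : c ∉ Δ.1 := fun h => hΔ (Δ.2.1.2.2.1 c _ h le_sup_left)
    have heΔ : e ∉ Δ.1 := fun h => hΔ (Δ.2.1.2.2.1 e _ h le_sup_right)
    exact hcΔ (hc ((mem_interior_hmap_inter hExtC).2 ⟨e, heΔ, hae', hbe'⟩))
  · refine closure_minimal ?_ isClosed_hmap
    intro Δ hΔ
    obtain ⟨c, hcΔ, hac, hbc⟩ := (mem_interior_hmap_inter hExtC).1 hΔ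
    have : (a ⊓ b) ⊔ c = ⊤ := by rw [sup_inf_right, hac, hbc, inf_top_eq]
    rcases Δ.2.1.2.2.2.1 _ c (by rw [this]; exact Δ.2.1.1) with h | h
    · exact h
    · exact absurd h hcΔ

omit hExtC hExtO in
theorem C_iff_hmap {a b : D} : E.C a b ↔ hmap E a ∩ hmap E b ≠ ∅ := by
  constructor
  · intro h
    obtain ⟨Γ, haΓ, hbΓ⟩ := exists_pt_pair h
    exact nonempty_iff_ne_empty.1 ⟨Γ, haΓ, hbΓ⟩
  · intro h
    obtain ⟨Γ, haΓ, hbΓ⟩ := nonempty_iff_ne_empty.2 h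
    exact Γ.2.1.2.2.2.2 a b haΓ hbΓ

omit hExtC hExtO in
theorem ll_of_compl {a b c : D} (hbc : b ⊔ c = ⊤) (hnc : ¬ E.C a c) : E.Ll a b := by
  have h1 : ¬ E.C c a := fun h => hnc (E.c4 _ _ h)
  have h2 : E.Ll a (c ⊔ b) := by
    rw [sup_comm c b, hbc]
    exact E.ll4 ⊤ a ⊤ ⊤ le_top E.ll2 le_rfl
  exact E.mll2 c a b h1 h2

omit hExtC hExtO in
theorem sup_finset_inf {b : D} {T : Finset D} (hT : ∀ w ∈ T, b ⊔ w = ⊤) :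
    b ⊔ T.inf id = ⊤ := by
  classical
  induction T using Finset.induction with
  | empty => simp
  | @insert x T hx ih =>
    rw [Finset.inf_insert]
    have hbx := hT x (Finset.mem_insert_self x T)
    have hbT := ih fun w hw => hT w (Finset.mem_insert_of_mem hw)
    rw [id, sup_inf_left, hbx, hbT, inf_top_eq]

omit hExtO in
theorem Ll_iff_hmap (hUll : ∀ a b : D, E.Ll a b → ∃ c : D, b ⊔ c = ⊤ ∧ ¬ E.C a c)
    {a b : D} : E.Ll a b ↔ hmap E a ⊆ interior (hmap E b) := by
  constructor
  · intro h Γ haΓ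
    obtain ⟨c, hbc, hnc⟩ := hUll a b h
    have hcΓ : c ∉ Γ.1 := fun hc => hnc (Γ.2.1.2.2.2.2 a c haΓ hc)
    exact (mem_interior_hmap hExtC).2 ⟨c, hcΓ, hbc⟩
  · intro h
    by_contra hna
    -- every c with b ⊔ c = ⊤ is in contact with a
    have key : ∀ c : D, b ⊔ c = ⊤ → E.C a c := by
      intro c hc
      by_contra hnc
      exact hna (ll_of_compl hc hnc)
    -- build a clan containing a and all such c
    classical
    obtain ⟨Γ₀, hΓ₀, hMΓ₀⟩ := exists_clan_superset
      (M := insert a {c : D | b ⊔ c = ⊤}) (by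
        intro S hS
        set T : Finset D := S.filter (fun w => b ⊔ w = ⊤) with hTdef
        have hT : ∀ w ∈ T, b ⊔ w = ⊤ := fun w hw => (Finset.mem_filter.1 hw).2
        have hbc : b ⊔ T.inf id = ⊤ := sup_finset_inf hT
        obtain ⟨Γ, hΓ, haΓ, hcΓ⟩ := exists_clan_pair (key _ hbc)
        refine ⟨Γ, hΓ, fun w hw => ?_⟩
        rcases hS hw with rfl | hw'
        · exact haΓ
        · have hwT : w ∈ T := Finset.mem_filter.2 ⟨hw, hw'⟩
          exact hΓ.2.2.1 _ w hcΓ (Finset.inf_le hwT))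
    obtain ⟨Δ', hsub, hΔ', hmax⟩ := exists_maxClan hΓ₀
    set Δ : Pt E := ⟨Δ', hΔ', hmax⟩ with hΔdef
    have haΔ : a ∈ Δ.1 := hsub (hMΓ₀ (mem_insert _ _))
    obtain ⟨c, hcΔ, hbc⟩ := (mem_interior_hmap hExtC).1 (h (mem_hmap.mpr haΔ))
    exact hcΔ (hsub (hMΓ₀ (mem_insert_iff.2 (Or.inr hbc))))

omit hExtC hExtO in
theorem c_of_cd {a b c d : D} (h : E.Cd a b) (hac : a ⊔ c = ⊤) (hbd : b ⊔ d = ⊤) :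
    E.C c d := by
  refine E.mcd2 a b d c (fun h' => (E.cd1 _ _ h').2 hbd) h (fun h' => (E.cd1 _ _ h').1 hac)

omit hExtO in
theorem Cd_iff_hmap (hUcd : ∀ a b : D, ¬ E.Cd a b →
      ∃ c d : D, a ⊔ c = ⊤ ∧ b ⊔ d = ⊤ ∧ ¬ E.C c d) {a b : D} :
    E.Cd a b ↔ interior (hmap E a) ∪ interior (hmap E b) ≠ (univ : Set (Pt E)) := by
  constructor
  · intro h
    classical
    obtain ⟨Γ₀, hΓ₀, hMΓ₀⟩ := exists_clan_superset
      (M := {c : D | a ⊔ c = ⊤} ∪ {c : D | b ⊔ c = ⊤}) (by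
        intro S hS
        set T₁ : Finset D := S.filter (fun w => a ⊔ w = ⊤) with hT₁
        set T₂ : Finset D := S.filter (fun w => ¬ (a ⊔ w = ⊤)) with hT₂
        have hc : a ⊔ T₁.inf id = ⊤ := sup_finset_inf fun w hw => (Finset.mem_filter.1 hw).2
        have hd : b ⊔ T₂.inf id = ⊤ := sup_finset_inf (fun w hw => by
          have h1 := (Finset.mem_filter.1 hw).2
          rcases hS (Finset.mem_filter.1 hw).1 with h2 | h2
          · exact absurd h2 h1
          · exact h2)
        obtain ⟨Γ, hΓ, hcΓ, hdΓ⟩ := exists_clan_pair (c_of_cd h hc hd)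
        refine ⟨Γ, hΓ, fun w hw => ?_⟩
        by_cases haw : a ⊔ w = ⊤
        · exact hΓ.2.2.1 _ w hcΓ (Finset.inf_le (Finset.mem_filter.2 ⟨hw, haw⟩))
        · exact hΓ.2.2.1 _ w hdΓ (Finset.inf_le (Finset.mem_filter.2 ⟨hw, haw⟩)))
    obtain ⟨Δ', hsub, hΔ', hmax⟩ := exists_maxClan hΓ₀
    set Δ : Pt E := ⟨Δ', hΔ', hmax⟩ with hΔdef
    intro huniv
    have hΔmem : Δ ∈ interior (hmap E a) ∪ interior (hmap E b) := by
      rw [huniv]; exact mem_univ Δ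
    rcases hΔmem with hm | hm
    · obtain ⟨c, hcΔ, hc⟩ := (mem_interior_hmap hExtC).1 hm
      exact hcΔ (hsub (hMΓ₀ (Or.inl hc)))
    · obtain ⟨c, hcΔ, hc⟩ := (mem_interior_hmap hExtC).1 hm
      exact hcΔ (hsub (hMΓ₀ (Or.inr hc)))
  · intro hne
    by_contra hncd
    obtain ⟨c, d, hac, hbd, hncd'⟩ := hUcd a b hncd
    refine hne (eq_univ_of_forall fun Γ => ?_)
    by_cases hcΓ : c ∈ Γ.1
    · by_cases hdΓ : d ∈ Γ.1
      · exact absurd (Γ.2.1.2.2.2.2 c d hcΓ hdΓ) hncd'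
      · exact Or.inr ((mem_interior_hmap hExtC).2 ⟨d, hdΓ, hbd⟩)
    · exact Or.inl ((mem_interior_hmap hExtC).2 ⟨c, hcΓ, hac⟩)

omit hExtC hExtO in
theorem pt_compact : CompactSpace (Pt E) := by
  refine ⟨isCompact_of_finite_subfamily_closed ?_⟩
  intro ι Z hZc hZe
  classical
  by_contra hno
  push_neg at hno
  set M : Set D := {c : D | ∃ i : ι, Z i ⊆ hmap E c} with hM
  have hfcp : ∀ S : Finset D, ↑S ⊆ M → ∃ Γ : Set D, IsClan E Γ ∧ ↑S ⊆ Γ := by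
    intro S hS
    set f : {w // w ∈ S} → ι := fun w => (hS w.2).choose with hf
    have hfspec : ∀ w : {w // w ∈ S}, Z (f w) ⊆ hmap E w.1 := fun w => (hS w.2).choose_spec
    have hne := hno (S.attach.image f)
    obtain ⟨Δ, -, hΔ⟩ := hne
    refine ⟨Δ.1, Δ.2.1, fun w hw => ?_⟩
    have : Δ ∈ Z (f ⟨w, hw⟩) := by
      have := mem_iInter₂.1 hΔ (f ⟨w, hw⟩) (Finset.mem_image_of_mem f (Finset.mem_attach _ _))
      exact this
    exact hfspec ⟨w, hw⟩ this
  obtain ⟨Γ₀, hΓ₀, hMΓ₀⟩ := exists_clan_superset hfcp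
  obtain ⟨Δ', hsub, hΔ', hmax⟩ := exists_maxClan hΓ₀
  set Δ : Pt E := ⟨Δ', hΔ', hmax⟩ with hΔdef
  have : Δ ∈ (univ : Set (Pt E)) ∩ ⋂ i, Z i := by
    refine ⟨mem_univ _, mem_iInter.2 fun i => ?_⟩
    have hcl : closure (Z i) = Z i := (hZc i).closure_eq
    rw [← hcl]
    rw [mem_closure_iff_basic]
    intro c hc
    exact hsub (hMΓ₀ ⟨i, hc⟩)
  rw [hZe] at this
  exact this

omit hExtC hExtO in
theorem pt_t1 : T1Space (Pt E) := by
  rw [t1Space_iff_exists_open]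
  intro Γ Δ hne
  have hsub : ¬ Δ.1 ⊆ Γ.1 := by
    intro h
    exact hne (Subtype.ext (Δ.2.2 Γ.1 Γ.2.1 h))
  obtain ⟨c, hcΔ, hcΓ⟩ := not_subset.1 hsub
  exact ⟨(hmap E c)ᶜ, GenerateOpen.basic _ ⟨c, rfl⟩, hcΓ, fun h => h hcΔ⟩

end Stmt17Aux

/-- topological representation theorem for C-extensional U-rich
EDC-lattices, in compact weakly regular T1 spaces. -/
theorem stmt17 {D : Type u} [DistribLattice D] [BoundedOrder D] (E : EDC D)
    (hExtO : ∀ a b : D, ¬ a ≤ b → ∃ c : D, a ⊔ c = ⊤ ∧ b ⊔ c ≠ ⊤)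
    (hUll : ∀ a b : D, E.Ll a b → ∃ c : D, b ⊔ c = ⊤ ∧ ¬ E.C a c)
    (hUcd : ∀ a b : D, ¬ E.Cd a b → ∃ c d : D, a ⊔ c = ⊤ ∧ b ⊔ d = ⊤ ∧ ¬ E.C c d)
    (hExtC : ∀ a : D, a ≠ ⊤ → ∃ b : D, b ≠ ⊥ ∧ ¬ E.C a b) :
    ∃ (X : Type u) (_ : TopologicalSpace X) (h : D → Set X),
      CompactSpace X ∧ T1Space X ∧
      (∀ F : Set X, IsClosed F →
        ∃ S : Set (Set X), (∀ s ∈ S, closure (interior s) = s) ∧ F = ⋂₀ S) ∧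
      (∀ a : Set X, IsOpen a → a ≠ ∅ → ∃ b : Set X, IsOpen b ∧ b ≠ ∅ ∧ closure b ⊆ a) ∧
      (∀ a : D, closure (interior (h a)) = h a) ∧
      Function.Injective h ∧
      h ⊥ = ∅ ∧ h ⊤ = Set.univ ∧
      (∀ a b : D, h (a ⊔ b) = h a ∪ h b) ∧
      (∀ a b : D, h (a ⊓ b) = closure (interior (h a ∩ h b))) ∧
      (∀ a b : D, a ≤ b ↔ h a ⊆ h b) ∧
      (∀ a b : D, E.C a b ↔ h a ∩ h b ≠ ∅) ∧
      (∀ a b : D, E.Cd a b ↔ interior (h a) ∪ interior (h b) ≠ Set.univ) ∧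
      (∀ a b : D, E.Ll a b ↔ h a ⊆ interior (h b)) ∧
      (∀ α : Set X, closure (interior α) = α → α ≠ Set.univ →
        ∃ a : D, α ⊆ h a ∧ h a ≠ Set.univ) := by
    classical
  open Stmt17Aux Set in
  refine ⟨Pt E, ptTop E, hmap E, pt_compact, pt_t1, ?_, ?_, ?_, ?_, hmap_bot, hmap_top,
    ?_, ?_, ?_, ?_, ?_, ?_, ?_⟩
  · -- semiregularity
    intro F hF
    refine ⟨{s | ∃ c : D, s = hmap E c ∧ F ⊆ hmap E c}, ?_, ?_⟩
    · rintro s ⟨c, rfl, -⟩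
      exact regclosed_hmap hExtC hExtO
    · apply subset_antisymm
      · intro Γ hΓ
        refine Set.mem_sInter.2 ?_
        rintro s ⟨c, rfl, hFc⟩
        exact hFc hΓ
      · intro Γ hΓ
        by_contra hΓF
        obtain ⟨c, hc, hsub⟩ := isOpen_iff_basic.1 hF.isOpen_compl Γ hΓF
        have hFc : F ⊆ hmap E c := compl_subset_compl.1 hsub
        exact hc (Set.mem_sInter.1 hΓ (hmap E c) ⟨c, rfl, hFc⟩)
  · -- weak regularity
    intro U hU hUne
    obtain ⟨Γ, hΓ⟩ := nonempty_iff_ne_empty.2 hUne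
    obtain ⟨c, hcΓ, hsub⟩ := isOpen_iff_basic.1 hU Γ hΓ
    have hc : c ≠ ⊤ := fun h => hcΓ (h ▸ Γ.2.1.1)
    obtain ⟨b, hb, hnc⟩ := hExtC c hc
    refine ⟨interior (hmap E b), isOpen_interior, ?_, ?_⟩
    · intro hemp
      have hbe : hmap E b = ∅ := by
        rw [← regclosed_hmap hExtC hExtO (a := b), hemp, closure_empty]
      obtain ⟨Δ, hΔ⟩ := exists_pt_mem (E := E) hb
      have hΔm : Δ ∈ hmap E b := hΔ
      rw [hbe] at hΔm
      exact hΔm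
    · rw [regclosed_hmap hExtC hExtO]
      intro Δ hΔ
      exact hsub fun hcΔ => hnc (Δ.2.1.2.2.2.2 c b hcΔ hΔ)
  · exact fun a => regclosed_hmap hExtC hExtO
  · intro a b hab
    exact le_antisymm ((hmap_le_iff hExtC hExtO).2 hab.subset)
      ((hmap_le_iff hExtC hExtO).2 hab.symm.subset)
  · exact fun a b => hmap_sup
  · exact fun a b => hmap_inf hExtC hExtO
  · exact fun a b => hmap_le_iff hExtC hExtO
  · exact fun a b => C_iff_hmap
  · exact fun a b => Cd_iff_hmap hExtC hUcd
  · exact fun a b => Ll_iff_hmap hExtC hUll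
  · -- dual density
    intro α hreg hne
    have hclosed : IsClosed α := hreg ▸ isClosed_closure
    obtain ⟨Γ, hΓ⟩ := (Set.ne_univ_iff_exists_notMem α).1 hne
    obtain ⟨c, hcΓ, hsub⟩ := isOpen_iff_basic.1 hclosed.isOpen_compl Γ hΓ
    refine ⟨c, ?_, ?_⟩
    · intro Δ hΔ
      by_contra hcΔ
      exact hsub hcΔ hΔ
    · intro h
      have : Γ ∈ hmap E c := h.symm ▸ Set.mem_univ Γ
      exact hcΓ this
end

section
/- Topological representation theorem in Hausdorff spaces: Let D be an EDC-lattice satisfying (Ext Ô): a ≰ b → ∃c, a + c = 1 and b + c ≠ 1; (U-rich ≪): a ≪ b → ∃c, b + c = 1 and ¬(a C c); (U-rich Ĉ): ¬(a Ĉ b) → ∃c ∃d, a + c = 1, b + d = 1 and ¬(c C d); (Ext C): a ≠ 1 → ∃b ≠ 0, ¬(a C b); and (Nor 1): ¬(a C b) → ∃c ∃d, c + d = 1, ¬(a C c) and ¬(b C d). Then there exist a compact Hausdorff (T2) topological space X and a map h : D → (subsets of X) such that: every h(a) is regular closed; h is injective; h(0) = ∅, h(1) = X; h(a+b) = h(a)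 ∪ h(b); h(a·b) = Cl(Int(h(a) ∩ h(b))); a ≤ b iff h(a) ⊆ h(b); a C b iff h(a) ∩ h(b) ≠ ∅; a Ĉ b iff Int(h(a)) ∪ Int(h(b)) ≠ X; a ≪ b iff h(a) ⊆ Int(h(b)); and h is dually dense: for every regular closed α ≠ X there exists a ∈ D with α ⊆ h(a) and h(a) ≠ X. -/
universe u

namespace EDCRep

open Set

variable {D : Type u} [DistribLattice D] [BoundedOrder D]

/-- A clan of an EDC-lattice. -/
def IsClan (E : EDC D) (Γ : Set D) : Prop :=
  (⊤ : D) ∈ Γ ∧ (∀ a b : D, a ∈ Γ → a ≤ b → b ∈ Γ) ∧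
    (∀ a b : D, a ⊔ b ∈ Γ → a ∈ Γ ∨ b ∈ Γ) ∧
    (∀ a b : D, a ∈ Γ → b ∈ Γ → E.C a b)

/-- A cluster: a maximal clan. -/
def IsCluster (E : EDC D) (Γ : Set D) : Prop :=
  IsClan E Γ ∧ ∀ Δ : Set D, IsClan E Δ → Γ ⊆ Δ → Δ = Γ

variable {E : EDC D}

theorem clan_bot_not_mem {Γ : Set D} (hΓ : IsClan E Γ) : (⊥ : D) ∉ Γ :=
  fun h => (E.c1 _ _ (hΓ.2.2.2 _ _ h h)).1 rfl

theorem exists_cluster {Γ : Set D} (hΓ : IsClan E Γ) :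
    ∃ Δ : Set D, IsCluster E Δ ∧ Γ ⊆ Δ := by
  have hzorn : ∀ c ⊆ {Δ : Set D | IsClan E Δ}, IsChain (· ⊆ ·) c → c.Nonempty →
      ∃ ub ∈ {Δ : Set D | IsClan E Δ}, ∀ s ∈ c, s ⊆ ub := by
    intro c hcS hchain hcne
    obtain ⟨Γ₀, hΓ₀⟩ := hcne
    refine ⟨⋃₀ c, ⟨⟨Γ₀, hΓ₀, (hcS hΓ₀).1⟩, ?_, ?_, ?_⟩, fun s hs => subset_sUnion_of_mem hs⟩
    · rintro a b ⟨Γ₁, h1, ha⟩ hab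
      exact ⟨Γ₁, h1, (hcS h1).2.1 a b ha hab⟩
    · rintro a b ⟨Γ₁, h1, hab⟩
      rcases (hcS h1).2.2.1 a b hab with h | h
      exacts [Or.inl ⟨Γ₁, h1, h⟩, Or.inr ⟨Γ₁, h1, h⟩]
    · rintro a b ⟨Γ₁, h1, ha⟩ ⟨Γ₂, h2, hb⟩
      by_cases hEq : Γ₁ = Γ₂
      · subst hEq; exact (hcS h1).2.2.2 a b ha hb
      · rcases hchain h1 h2 hEq with h | h
        · exact (hcS h2).2.2.2 a b (h ha) hb
        · exact (hcS h1).2.2.2 a b ha (h hb)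
  obtain ⟨m, hsub, hm⟩ := zorn_subset_nonempty {Δ : Set D | IsClan E Δ} hzorn Γ hΓ
  exact ⟨m, ⟨hm.1, fun Δ hΔ hsub' => le_antisymm (hm.2 hΔ hsub') hsub'⟩, hsub⟩

/-- Filters (as plain predicates). -/
def IsFilt (F : Set D) : Prop :=
  (⊤ : D) ∈ F ∧ (∀ a b : D, a ∈ F → a ≤ b → b ∈ F) ∧ ∀ a b : D, a ∈ F → b ∈ F → a ⊓ b ∈ F

theorem exists_max_filter (T : Set D) (hup : ∀ x y : D, x ∈ T → x ≤ y → y ∈ T)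
    (a : D) (ha : a ∈ T) :
    ∃ F : Set D, (IsFilt F ∧ a ∈ F ∧ F ⊆ T) ∧
      ∀ G : Set D, IsFilt G → a ∈ G → G ⊆ T → F ⊆ G → G ⊆ F := by
  have hzorn : ∀ c ⊆ {F : Set D | IsFilt F ∧ a ∈ F ∧ F ⊆ T}, IsChain (· ⊆ ·) c →
      c.Nonempty → ∃ ub ∈ {F : Set D | IsFilt F ∧ a ∈ F ∧ F ⊆ T}, ∀ s ∈ c, s ⊆ ub := by
    intro c hcS hchain hcne
    obtain ⟨F₀, hF₀⟩ := hcne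
    refine ⟨⋃₀ c, ⟨⟨⟨F₀, hF₀, (hcS hF₀).1.1⟩, ?_, ?_⟩, ⟨F₀, hF₀, (hcS hF₀).2.1⟩, ?_⟩,
      fun s hs => subset_sUnion_of_mem hs⟩
    · rintro x y ⟨F₁, h1, hx⟩ hxy
      exact ⟨F₁, h1, (hcS h1).1.2.1 x y hx hxy⟩
    · rintro x y ⟨F₁, h1, hx⟩ ⟨F₂, h2, hy⟩
      by_cases hEq : F₁ = F₂
      · subst hEq; exact ⟨F₁, h1, (hcS h1).1.2.2 x y hx hy⟩
      · rcases hchain h1 h2 hEq with h | h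
        · exact ⟨F₂, h2, (hcS h2).1.2.2 x y (h hx) hy⟩
        · exact ⟨F₁, h1, (hcS h1).1.2.2 x y hx (h hy)⟩
    · rintro x ⟨F₁, h1, hx⟩
      exact (hcS h1).2.2 hx
  obtain ⟨m, -, hm⟩ := zorn_subset_nonempty {F : Set D | IsFilt F ∧ a ∈ F ∧ F ⊆ T} hzorn
      {x | a ≤ x} ⟨⟨le_top, fun x y hx hxy => le_trans hx hxy,
        fun x y hx hy => le_inf hx hy⟩, le_rfl, fun x hx => hup a x ha hx⟩
  exact ⟨m, hm.1, fun G hG haG hGT hsub => hm.2 ⟨hG, haG, hGT⟩ hsub⟩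

theorem max_filter_escape {T F : Set D} {a : D}
    (hup : ∀ x y : D, x ∈ T → x ≤ y → y ∈ T)
    (hF : IsFilt F) (haF : a ∈ F) (hFT : F ⊆ T)
    (hmax : ∀ G : Set D, IsFilt G → a ∈ G → G ⊆ T → F ⊆ G → G ⊆ F)
    {u : D} (hu : u ∉ F) : ∃ f ∈ F, f ⊓ u ∉ T := by
  by_contra hcon
  push_neg at hcon
  have hGfilt : IsFilt {z | ∃ f ∈ F, f ⊓ u ≤ z} :=
    ⟨⟨⊤, hF.1, le_top⟩, fun x y ⟨f, hf, hfx⟩ hxy => ⟨f, hf, hfx.trans hxy⟩,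
      fun x y ⟨f, hf, hfx⟩ ⟨g, hg, hgy⟩ => ⟨f ⊓ g, hF.2.2 _ _ hf hg,
        le_inf ((inf_le_inf_right u inf_le_left).trans hfx)
          ((inf_le_inf_right u inf_le_right).trans hgy)⟩⟩
  have hGT : {z | ∃ f ∈ F, f ⊓ u ≤ z} ⊆ T := by
    rintro z ⟨f, hf, hfz⟩
    exact hup _ _ (hcon f hf) hfz
  have hsub := hmax _ hGfilt ⟨a, haF, inf_le_left⟩ hGT (fun x hx => ⟨x, hx, inf_le_left⟩)
  exact hu (hsub ⟨⊤, hF.1, by simp⟩)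

theorem exists_prime_filter (T : Set D) (hup : ∀ x y : D, x ∈ T → x ≤ y → y ∈ T)
    (hpr : ∀ x y : D, x ⊔ y ∈ T → x ∈ T ∨ y ∈ T)
    (a : D) (ha : a ∈ T) :
    ∃ F : Set D, IsFilt F ∧ a ∈ F ∧ F ⊆ T ∧ ∀ x y : D, x ⊔ y ∈ F → x ∈ F ∨ y ∈ F := by
  obtain ⟨F, ⟨hFilt, haF, hFT⟩, hmax⟩ := exists_max_filter T hup a ha
  refine ⟨F, hFilt, haF, hFT, ?_⟩
  intro x y hxy
  by_contra hcon
  push_neg at hcon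
  obtain ⟨f₁, hf₁, hf₁T⟩ := max_filter_escape hup hFilt haF hFT hmax hcon.1
  obtain ⟨f₂, hf₂, hf₂T⟩ := max_filter_escape hup hFilt haF hFT hmax hcon.2
  have hfF : f₁ ⊓ f₂ ∈ F := hFilt.2.2 _ _ hf₁ hf₂
  have h2 : ((f₁ ⊓ f₂) ⊓ x) ⊔ ((f₁ ⊓ f₂) ⊓ y) ∈ T := by
    rw [← inf_sup_left]
    exact hFT (hFilt.2.2 _ _ hfF hxy)
  rcases hpr _ _ h2 with h | h
  · exact hf₁T (hup _ _ h (inf_le_inf_right x inf_le_left))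
  · exact hf₂T (hup _ _ h (inf_le_inf_right y inf_le_right))

theorem contact_clan {a b : D} (hab : E.C a b) : ∃ Γ, IsClan E Γ ∧ a ∈ Γ ∧ b ∈ Γ := by
  obtain ⟨F, hF, haF, hFT1, hFpr⟩ := exists_prime_filter {x | E.C x b}
    (fun x y hx hxy => E.c2 x y b b hx hxy le_rfl)
    (fun x y hxy => (E.c3 b x y (E.c4 _ _ hxy)).imp (E.c4 b x) (E.c4 b y)) a hab
  have hT2pr : ∀ y y' : D, y ⊔ y' ∈ {y | ∀ x ∈ F, E.C x y} →
      y ∈ {y | ∀ x ∈ F, E.C x y} ∨ y' ∈ {y | ∀ x ∈ F, E.C x y} := by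
    intro y y' hyy'
    by_contra hcon
    push_neg at hcon
    obtain ⟨h1, h2⟩ := hcon
    simp only [mem_setOf_eq, not_forall] at h1 h2
    obtain ⟨x₁, hx₁, hx₁y⟩ := h1
    obtain ⟨x₂, hx₂, hx₂y⟩ := h2
    have hx : x₁ ⊓ x₂ ∈ F := hF.2.2 _ _ hx₁ hx₂
    rcases E.c3 (x₁ ⊓ x₂) y y' (hyy' _ hx) with h | h
    · exact hx₁y (E.c2 (x₁ ⊓ x₂) x₁ y y h inf_le_left le_rfl)
    · exact hx₂y (E.c2 (x₁ ⊓ x₂) x₂ y' y' h inf_le_right le_rfl)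
  obtain ⟨G, hG, hbG, hGT2, hGpr⟩ := exists_prime_filter {y | ∀ x ∈ F, E.C x y}
    (fun y y' hy hyy' x hx => E.c2 x x y y' (hy x hx) le_rfl hyy') hT2pr b (fun x hx => hFT1 hx)
  have hbotF : (⊥ : D) ∉ F := fun h => (E.c1 ⊥ b (hFT1 h)).1 rfl
  have hbotG : (⊥ : D) ∉ G := fun h => (E.c1 ⊤ ⊥ (hGT2 h ⊤ hF.1)).2 rfl
  refine ⟨F ∪ G, ⟨Or.inl hF.1, ?_, ?_, ?_⟩, Or.inl haF, Or.inr hbG⟩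
  · rintro x y (hx | hx) hxy
    exacts [Or.inl (hF.2.1 x y hx hxy), Or.inr (hG.2.1 x y hx hxy)]
  · rintro x y (hxy | hxy)
    exacts [(hFpr x y hxy).imp Or.inl Or.inl, (hGpr x y hxy).imp Or.inr Or.inr]
  · rintro x y (hx | hx) (hy | hy)
    · have hm := hF.2.2 x y hx hy
      exact E.c5 x y (fun h => hbotF (h ▸ hm))
    · exact hGT2 hy x hx
    · exact E.c4 _ _ (hGT2 hx y hy)
    · have hm := hG.2.2 x y hx hy
      exact E.c5 x y (fun h => hbotG (h ▸ hm))

/-- The cluster-membership lemma, using (Nor 1). -/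
theorem cluster_mem
    (hNor1 : ∀ a b : D, ¬ E.C a b → ∃ c d : D, c ⊔ d = ⊤ ∧ ¬ E.C a c ∧ ¬ E.C b d)
    {Δ : Set D} (hΔ : IsCluster E Δ) {a : D}
    (h : ∀ y ∈ Δ, E.C a y) : a ∈ Δ := by
  classical
  have hup : ∀ x y : D, x ∈ {z | ∀ y ∈ Δ, E.C z y} → x ≤ y → y ∈ {z | ∀ y ∈ Δ, E.C z y} :=
    fun x y hx hxy z hz => E.c2 x y z z (hx z hz) hxy le_rfl
  obtain ⟨F, ⟨hFilt, haF, hFT⟩, hmax⟩ := exists_max_filter {z | ∀ y ∈ Δ, E.C z y} hup a h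
  have hbotF : (⊥ : D) ∉ F := fun hb => (E.c1 ⊥ ⊤ (hFT hb ⊤ hΔ.1.1)).1 rfl
  by_cases hpr : ∀ x y : D, x ⊔ y ∈ F → x ∈ F ∨ y ∈ F
  · have hclan : IsClan E (Δ ∪ F) := by
      refine ⟨Or.inl hΔ.1.1, ?_, ?_, ?_⟩
      · rintro x y (hx | hx) hxy
        exacts [Or.inl (hΔ.1.2.1 x y hx hxy), Or.inr (hFilt.2.1 x y hx hxy)]
      · rintro x y (hxy | hxy)
        exacts [(hΔ.1.2.2.1 x y hxy).imp Or.inl Or.inl, (hpr x y hxy).imp Or.inr Or.inr]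
      · rintro x y (hx | hx) (hy | hy)
        · exact hΔ.1.2.2.2 x y hx hy
        · exact E.c4 _ _ (hFT hy x hx)
        · exact hFT hx y hy
        · have hm := hFilt.2.2 x y hx hy
          exact E.c5 x y (fun hbot => hbotF (hbot ▸ hm))
    have heq := hΔ.2 (Δ ∪ F) hclan subset_union_left
    exact heq ▸ (show a ∈ Δ ∪ F from Or.inr haF)
  · exfalso
    push_neg at hpr
    obtain ⟨x, y, hxy, hx, hy⟩ := hpr
    obtain ⟨f₁, hf₁, hf₁T⟩ := max_filter_escape hup hFilt haF hFT hmax hx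
    obtain ⟨f₂, hf₂, hf₂T⟩ := max_filter_escape hup hFilt haF hFT hmax hy
    have hpT : (f₁ ⊓ f₂) ⊓ x ∉ {z | ∀ y ∈ Δ, E.C z y} :=
      fun hp => hf₁T (hup _ _ hp (inf_le_inf_right x inf_le_left))
    have hqT : (f₁ ⊓ f₂) ⊓ y ∉ {z | ∀ y ∈ Δ, E.C z y} :=
      fun hq => hf₂T (hup _ _ hq (inf_le_inf_right y inf_le_right))
    have hpq : ((f₁ ⊓ f₂) ⊓ x) ⊔ ((f₁ ⊓ f₂) ⊓ y) ∈ {z | ∀ y ∈ Δ, E.C z y} := by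
      apply hFT
      rw [← inf_sup_left]
      exact hFilt.2.2 _ _ (hFilt.2.2 _ _ hf₁ hf₂) hxy
    simp only [mem_setOf_eq, not_forall] at hpT hqT
    obtain ⟨y₁, hy₁Δ, hpy₁⟩ := hpT
    obtain ⟨y₂, hy₂Δ, hqy₂⟩ := hqT
    obtain ⟨c₁, d₁, hcd₁, hpc₁, hyd₁⟩ := hNor1 _ y₁ hpy₁
    obtain ⟨c₂, d₂, hcd₂, hqc₂, hyd₂⟩ := hNor1 _ y₂ hqy₂
    have e1 : c₁ ⊔ (d₁ ⊔ d₂) = ⊤ := by rw [← sup_assoc, hcd₁, top_sup_eq]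
    have e2 : c₂ ⊔ (d₁ ⊔ d₂) = ⊤ := by rw [sup_left_comm, hcd₂, sup_top_eq]
    have htop : (c₁ ⊓ c₂) ⊔ (d₁ ⊔ d₂) = ⊤ := by
      rw [sup_inf_right, e1, e2, inf_idem]
    have hmem : (c₁ ⊓ c₂) ⊔ (d₁ ⊔ d₂) ∈ Δ := htop ▸ hΔ.1.1
    rcases hΔ.1.2.2.1 _ _ hmem with hc | hd
    · have hCpq := hpq _ hc
      rcases E.c3 (c₁ ⊓ c₂) _ _ (E.c4 _ _ hCpq) with h' | h'
      · exact hpc₁ (E.c4 _ _ (E.c2 _ c₁ _ _ (E.c4 _ _ (E.c4 _ _ h')) inf_le_left le_rfl))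
      · exact hqc₂ (E.c4 _ _ (E.c2 _ c₂ _ _ h' inf_le_right le_rfl))
    · rcases hΔ.1.2.2.1 _ _ hd with h' | h'
      · exact hyd₁ (hΔ.1.2.2.2 _ _ hy₁Δ h')
      · exact hyd₂ (hΔ.1.2.2.2 _ _ hy₂Δ h')

theorem cluster_not_le
    (hExtO : ∀ a b : D, ¬ a ≤ b → ∃ c : D, a ⊔ c = ⊤ ∧ b ⊔ c ≠ ⊤)
    (hExtC : ∀ a : D, a ≠ ⊤ → ∃ b : D, b ≠ ⊥ ∧ ¬ E.C a b)
    {a b : D} (h : ¬ a ≤ b) :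
    ∃ Γ : Set D, IsCluster E Γ ∧ a ∈ Γ ∧ b ∉ Γ := by
  obtain ⟨c, hac, hbc⟩ := hExtO a b h
  obtain ⟨e, he0, hce⟩ := hExtC (b ⊔ c) hbc
  have hCee : E.C e e := E.c5 e e (by simpa using he0)
  obtain ⟨Γ₀, hΓ₀, heΓ₀, -⟩ := contact_clan hCee
  obtain ⟨Γ, hΓ, hsub⟩ := exists_cluster hΓ₀
  have heΓ : e ∈ Γ := hsub heΓ₀
  have hbΓ : b ∉ Γ := fun hb =>
    hce (E.c2 b (b ⊔ c) e e (hΓ.1.2.2.2 b e hb heΓ) le_sup_left le_rfl)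
  have hcΓ : c ∉ Γ := fun hc =>
    hce (E.c2 c (b ⊔ c) e e (hΓ.1.2.2.2 c e hc heΓ) le_sup_right le_rfl)
  have hmem : a ⊔ c ∈ Γ := by rw [hac]; exact hΓ.1.1
  rcases hΓ.1.2.2.1 a c hmem with h' | h'
  exacts [⟨Γ, hΓ, h', hbΓ⟩, absurd h' hcΓ]

theorem ll_of {a b c : D} (hbc : b ⊔ c = ⊤) (hnc : ¬ E.C a c) : E.Ll a b := by
  have h1 : E.Ll a ⊤ := E.ll4 ⊤ a ⊤ ⊤ le_top E.ll2 le_rfl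
  have h2 : E.Ll a (c ⊔ b) := by rw [sup_comm, hbc]; exact h1
  exact E.mll2 c a b (fun h => hnc (E.c4 c a h)) h2

theorem contact_of_cd {a b c d : D} (hcd : E.Cd a b) (hac : a ⊔ c = ⊤) (hbd : b ⊔ d = ⊤) :
    E.C c d := by
  refine E.mcd2 a b d c ?_ hcd ?_
  · intro h; exact (E.cd1 _ _ h).2 hbd
  · intro h; exact (E.cd1 _ _ h).1 hac

/-! ### The cluster space -/

variable (E)

def ClSp : Type u := {Γ : Set D // IsCluster E Γ}

def hh (a : D) : Set (ClSp E) := {Γ | a ∈ Γ.1}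

def clT : Set (Set (ClSp E)) := {F | ∃ A : Set D, F = ⋂ a ∈ A, hh E a}

theorem hh_bot : hh E ⊥ = ∅ := by
  ext Γ
  simp only [hh, mem_setOf_eq, mem_empty_iff_false, iff_false]
  exact clan_bot_not_mem Γ.2.1

theorem hh_top : hh E ⊤ = univ := eq_univ_of_forall fun Γ => Γ.2.1.1

theorem hh_mono {a b : D} (hab : a ≤ b) : hh E a ⊆ hh E b :=
  fun Γ h => Γ.2.1.2.1 a b h hab

theorem hh_sup (a b : D) : hh E (a ⊔ b) = hh E a ∪ hh E b := by
  ext Γ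
  constructor
  · intro h
    exact (Γ.2.1.2.2.1 a b h).imp id id
  · rintro (h | h)
    exacts [Γ.2.1.2.1 a _ h le_sup_left, Γ.2.1.2.1 b _ h le_sup_right]

theorem empty_mem_clT : ∅ ∈ clT E :=
  ⟨{⊥}, by rw [biInter_singleton, hh_bot]⟩

theorem sInter_mem_clT : ∀ A, A ⊆ clT E → ⋂₀ A ∈ clT E := by
  intro S hS
  refine ⟨{a | ∃ F ∈ S, F ⊆ hh E a}, ?_⟩
  apply Subset.antisymm
  · intro Γ hΓ
    rw [mem_iInter₂]
    rintro a ⟨F, hF, hsub⟩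
    exact hsub (hΓ F hF)
  · intro Γ hΓ
    intro F hF
    obtain ⟨A, rfl⟩ := hS hF
    rw [mem_iInter₂]
    intro a haA
    exact mem_iInter₂.1 hΓ a ⟨_, hF, biInter_subset_of_mem haA⟩

theorem union_mem_clT : ∀ F ∈ clT E, ∀ G ∈ clT E, F ∪ G ∈ clT E := by
  rintro F ⟨A, rfl⟩ G ⟨B, rfl⟩
  refine ⟨{x | ∃ a ∈ A, ∃ b ∈ B, x = a ⊔ b}, ?_⟩
  ext Γ
  constructor
  · intro h
    rw [mem_iInter₂]
    rintro x ⟨a, ha, b, hb, rfl⟩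
    rcases h with h | h
    · exact Γ.2.1.2.1 a (a ⊔ b) (mem_iInter₂.1 h a ha) le_sup_left
    · exact Γ.2.1.2.1 b (a ⊔ b) (mem_iInter₂.1 h b hb) le_sup_right
  · intro h
    by_cases hF : Γ ∈ ⋂ a ∈ A, hh E a
    · exact Or.inl hF
    · refine Or.inr (mem_iInter₂.2 fun b hb => ?_)
      have hex : ∃ a ∈ A, Γ ∉ hh E a := by
        by_contra hcon
        push_neg at hcon
        exact hF (mem_iInter₂.2 hcon)
      obtain ⟨a, ha, hna⟩ := hex
      have hab : a ⊔ b ∈ Γ.1 := mem_iInter₂.1 h (a ⊔ b) ⟨a, ha, b, hb, rfl⟩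
      rcases Γ.2.1.2.2.1 a b hab with h' | h'
      · exact absurd h' hna
      · exact h'

instance : TopologicalSpace (ClSp E) :=
  TopologicalSpace.ofClosed (clT E) (empty_mem_clT E) (sInter_mem_clT E) (union_mem_clT E)

theorem isOpen_iff {U : Set (ClSp E)} : IsOpen U ↔ Uᶜ ∈ clT E := Iff.rfl

theorem isClosed_iff {F : Set (ClSp E)} : IsClosed F ↔ F ∈ clT E := by
  rw [← isOpen_compl_iff, isOpen_iff, compl_compl]

theorem isClosed_hh (a : D) : IsClosed (hh E a) :=
  (isClosed_iff E).2 ⟨{a}, by rw [biInter_singleton]⟩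

theorem basic_nbhd {U : Set (ClSp E)} (hU : IsOpen U) {Γ : ClSp E} (hΓ : Γ ∈ U) :
    ∃ a : D, a ∉ Γ.1 ∧ (hh E a)ᶜ ⊆ U := by
  obtain ⟨A, hA⟩ := (isOpen_iff E).1 hU
  have hΓ' : Γ ∉ Uᶜ := fun h => h hΓ
  rw [hA] at hΓ'
  have hex : ∃ a ∈ A, Γ ∉ hh E a := by
    by_contra hcon
    push_neg at hcon
    exact hΓ' (mem_iInter₂.2 hcon)
  obtain ⟨a, ha, hna⟩ := hex
  refine ⟨a, hna, fun Δ hΔ => ?_⟩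
  by_contra hΔU
  have hΔc : Δ ∈ Uᶜ := hΔU
  rw [hA] at hΔc
  exact hΔ (mem_iInter₂.1 hΔc a ha)

theorem compl_subset_interior {b c : D} (hc : b ⊔ c = ⊤) :
    (hh E c)ᶜ ⊆ interior (hh E b) := by
  refine interior_maximal ?_ (isClosed_hh E c).isOpen_compl
  intro Γ hΓ
  have hmem : b ⊔ c ∈ Γ.1 := by rw [hc]; exact Γ.2.1.1
  rcases Γ.2.1.2.2.1 b c hmem with h | h
  exacts [h, absurd h hΓ]

variable {E}

theorem hh_le (hExtO : ∀ a b : D, ¬ a ≤ b → ∃ c : D, a ⊔ c = ⊤ ∧ b ⊔ c ≠ ⊤)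
    (hExtC : ∀ a : D, a ≠ ⊤ → ∃ b : D, b ≠ ⊥ ∧ ¬ E.C a b)
    (a b : D) : a ≤ b ↔ hh E a ⊆ hh E b := by
  constructor
  · exact fun h => hh_mono E h
  · intro h
    by_contra hn
    obtain ⟨Γ, hΓ, haΓ, hbΓ⟩ := cluster_not_le hExtO hExtC hn
    exact hbΓ (h (show (⟨Γ, hΓ⟩ : ClSp E) ∈ hh E a from haΓ))

theorem hh_univ_iff (hExtO : ∀ a b : D, ¬ a ≤ b → ∃ c : D, a ⊔ c = ⊤ ∧ b ⊔ c ≠ ⊤)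
    (hExtC : ∀ a : D, a ≠ ⊤ → ∃ b : D, b ≠ ⊥ ∧ ¬ E.C a b)
    {a : D} : hh E a = univ ↔ a = ⊤ := by
  constructor
  · intro h
    by_contra hne
    obtain ⟨Γ, hΓ, -, haΓ⟩ := cluster_not_le hExtO hExtC
      (show ¬ (⊤ : D) ≤ a from fun hle => hne (top_le_iff.1 hle))
    exact haΓ (show (⟨Γ, hΓ⟩ : ClSp E) ∈ hh E a from h ▸ mem_univ _)
  · rintro rfl
    exact hh_top E

theorem contact_iff (a b : D) : E.C a b ↔ hh E a ∩ hh E b ≠ ∅ := by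
  constructor
  · intro h
    obtain ⟨Γ₀, hΓ₀, ha, hb⟩ := contact_clan h
    obtain ⟨Γ, hΓ, hsub⟩ := exists_cluster hΓ₀
    exact nonempty_iff_ne_empty.1 ⟨⟨Γ, hΓ⟩, hsub ha, hsub hb⟩
  · intro h
    obtain ⟨Γ, hΓa, hΓb⟩ := nonempty_iff_ne_empty.2 h
    exact Γ.2.1.2.2.2 a b hΓa hΓb

theorem interior_hh (hExtO : ∀ a b : D, ¬ a ≤ b → ∃ c : D, a ⊔ c = ⊤ ∧ b ⊔ c ≠ ⊤)
    (hExtC : ∀ a : D, a ≠ ⊤ → ∃ b : D, b ≠ ⊥ ∧ ¬ E.C a b)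
    (b : D) : interior (hh E b) = ⋃ c ∈ {c : D | b ⊔ c = ⊤}, (hh E c)ᶜ := by
  apply Subset.antisymm
  · intro Γ hΓ
    obtain ⟨a, haΓ, hsub⟩ := basic_nbhd E isOpen_interior hΓ
    have hsub' : (hh E a)ᶜ ⊆ hh E b := hsub.trans interior_subset
    have hcov : hh E (a ⊔ b) = univ := by
      rw [hh_sup]
      refine eq_univ_of_forall fun Δ => ?_
      by_cases hΔ : Δ ∈ hh E a
      · exact Or.inl hΔ
      · exact Or.inr (hsub' hΔ)
    have htop : b ⊔ a = ⊤ := by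
      rw [sup_comm]
      exact (hh_univ_iff hExtO hExtC).1 hcov
    exact mem_iUnion₂.2 ⟨a, htop, haΓ⟩
  · refine iUnion₂_subset fun c hc => ?_
    exact compl_subset_interior E hc

theorem hh_regclosed (hExtO : ∀ a b : D, ¬ a ≤ b → ∃ c : D, a ⊔ c = ⊤ ∧ b ⊔ c ≠ ⊤)
    (hExtC : ∀ a : D, a ≠ ⊤ → ∃ b : D, b ≠ ⊥ ∧ ¬ E.C a b)
    (a : D) : closure (interior (hh E a)) = hh E a := by
  apply Subset.antisymm
  · exact closure_minimal interior_subset (isClosed_hh E a)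
  · intro Γ hΓ
    rw [mem_closure_iff]
    intro U hU hΓU
    obtain ⟨d, hdΓ, hsub⟩ := basic_nbhd E hU hΓU
    have hnad : ¬ a ≤ d := fun h => hdΓ (Γ.2.1.2.1 a d hΓ h)
    obtain ⟨c, hac, hdc⟩ := hExtO a d hnad
    have h1 : (hh E c)ᶜ ⊆ interior (hh E a) := compl_subset_interior E hac
    have h2 : hh E (d ⊔ c) ≠ univ := fun h => hdc ((hh_univ_iff hExtO hExtC).1 h)
    obtain ⟨Δ, hΔ⟩ := nonempty_compl.2 h2
    refine ⟨Δ, ?_, ?_⟩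
    · exact hsub (fun hd => hΔ (Δ.2.1.2.1 d (d ⊔ c) hd le_sup_left))
    · exact h1 (fun hcm => hΔ (Δ.2.1.2.1 c (d ⊔ c) hcm le_sup_right))

theorem hh_inf (hExtO : ∀ a b : D, ¬ a ≤ b → ∃ c : D, a ⊔ c = ⊤ ∧ b ⊔ c ≠ ⊤)
    (hExtC : ∀ a : D, a ≠ ⊤ → ∃ b : D, b ≠ ⊥ ∧ ¬ E.C a b)
    (a b : D) : hh E (a ⊓ b) = closure (interior (hh E a ∩ hh E b)) := by
  apply Subset.antisymm
  · conv_lhs => rw [← hh_regclosed hExtO hExtC (a ⊓ b)]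
    refine closure_mono (interior_mono ?_)
    intro Γ h
    exact ⟨Γ.2.1.2.1 _ _ h inf_le_left, Γ.2.1.2.1 _ _ h inf_le_right⟩
  · refine closure_minimal ?_ (isClosed_hh E (a ⊓ b))
    intro Γ hΓ
    obtain ⟨e, heΓ, hsub⟩ := basic_nbhd E isOpen_interior hΓ
    have hsub' : (hh E e)ᶜ ⊆ hh E a ∩ hh E b := hsub.trans interior_subset
    have ha : e ⊔ a = ⊤ := by
      apply (hh_univ_iff hExtO hExtC).1
      rw [hh_sup]
      refine eq_univ_of_forall fun Δ => ?_
      by_cases h : Δ ∈ hh E e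
      · exact Or.inl h
      · exact Or.inr (hsub' h).1
    have hb : e ⊔ b = ⊤ := by
      apply (hh_univ_iff hExtO hExtC).1
      rw [hh_sup]
      refine eq_univ_of_forall fun Δ => ?_
      by_cases h : Δ ∈ hh E e
      · exact Or.inl h
      · exact Or.inr (hsub' h).2
    have hmem : e ⊔ (a ⊓ b) ∈ Γ.1 := by
      rw [sup_inf_left, ha, hb, inf_idem]
      exact Γ.2.1.1
    rcases Γ.2.1.2.2.1 e (a ⊓ b) hmem with h' | h'
    exacts [absurd h' heΓ, h']

theorem compactSpace : CompactSpace (ClSp E) := by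
  constructor
  apply isCompact_of_finite_subfamily_closed
  intro ι Z hZc hZe
  by_contra hcon
  push_neg at hcon
  classical
  choose A hA using fun i => (isClosed_iff E).1 (hZc i)
  set B : Set D := ⋃ i, A i with hB
  have key : ∀ (a b : D) (P : Bool → Bool → Prop), IsClosed {f : D → Bool | P (f a) (f b)} := by
    intro a b P
    have heq : {f : D → Bool | P (f a) (f b)} =
        (fun f : D → Bool => (f a, f b)) ⁻¹' {p : Bool × Bool | P p.1 p.2} := rfl
    rw [heq]
    exact IsClosed.preimage ((continuous_apply a).prodMk (continuous_apply b))
      (isClosed_discrete _)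
  have key3 : ∀ (a b c : D) (P : Bool → Bool → Bool → Prop),
      IsClosed {f : D → Bool | P (f a) (f b) (f c)} := by
    intro a b c P
    have heq : {f : D → Bool | P (f a) (f b) (f c)} =
        (fun f : D → Bool => (f a, f b, f c)) ⁻¹' {p : Bool × Bool × Bool | P p.1 p.2.1 p.2.2} :=
      rfl
    rw [heq]
    exact IsClosed.preimage
      ((continuous_apply a).prodMk ((continuous_apply b).prodMk (continuous_apply c)))
      (isClosed_discrete _)
  set K : Set (D → Bool) := {f : D → Bool | f ⊤ = true} ∩
      ((⋂ (a : D), ⋂ (b : D), {f : D → Bool | a ≤ b → f a = true → f b = true}) ∩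
       ((⋂ (a : D), ⋂ (b : D), {f : D → Bool | f (a ⊔ b) = true → f a = true ∨ f b = true}) ∩
        (⋂ (a : D), ⋂ (b : D), {f : D → Bool | f a = true → f b = true → E.C a b}))) with hK
  have hKc : IsClosed K := by
    refine IsClosed.inter (key ⊤ ⊤ fun x _ => x = true) (IsClosed.inter ?_ (IsClosed.inter ?_ ?_))
    · exact isClosed_iInter fun a => isClosed_iInter fun b =>
        key a b fun x y => a ≤ b → x = true → y = true
    · exact isClosed_iInter fun a => isClosed_iInter fun b =>
        key3 (a ⊔ b) a b fun x y z => x = true → y = true ∨ z = true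
    · exact isClosed_iInter fun a => isClosed_iInter fun b =>
        key a b fun x y => x = true → y = true → E.C a b
  have hfip : ∀ u : Finset B, (K ∩ ⋂ b ∈ u, {f : D → Bool | f b.1 = true}).Nonempty := by
    intro u
    choose idx hidx using fun b : B => mem_iUnion.1 b.2
    obtain ⟨Γ, -, hΓ⟩ := hcon (u.image idx)
    refine ⟨fun d => decide (d ∈ Γ.1), ⟨?_, ?_, ?_, ?_⟩, ?_⟩
    · simp only [mem_setOf_eq, decide_eq_true_eq]
      exact Γ.2.1.1
    · simp only [mem_iInter, mem_setOf_eq, decide_eq_true_eq]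
      exact fun a b hab ha => Γ.2.1.2.1 a b ha hab
    · simp only [mem_iInter, mem_setOf_eq, decide_eq_true_eq]
      exact fun a b hab => Γ.2.1.2.2.1 a b hab
    · simp only [mem_iInter, mem_setOf_eq, decide_eq_true_eq]
      exact fun a b ha hb => Γ.2.1.2.2.2 a b ha hb
    · rw [mem_iInter₂]
      intro b hb
      have h2 : idx b ∈ u.image idx := Finset.mem_image_of_mem idx hb
      have h3 : Γ ∈ Z (idx b) := mem_iInter₂.1 hΓ (idx b) h2
      rw [hA (idx b)] at h3
      have h4 : Γ ∈ hh E b.1 := mem_iInter₂.1 h3 b.1 (hidx b)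
      simp only [mem_setOf_eq, decide_eq_true_eq]
      exact h4
  have hKcomp : IsCompact K := hKc.isCompact
  obtain ⟨f, hfK, hfB⟩ := hKcomp.inter_iInter_nonempty
      (fun b : B => {f : D → Bool | f b.1 = true})
      (fun b => key b.1 b.1 fun x _ => x = true)
      (fun u => by simpa using hfip u)
  obtain ⟨hf1, hf2, hf3, hf4⟩ := hfK
  simp only [mem_setOf_eq, mem_iInter, decide_eq_true_eq] at hf1 hf2 hf3 hf4
  have hΓ₀ : IsClan E {d | f d = true} := by
    refine ⟨hf1, ?_, ?_, ?_⟩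
    · exact fun a b ha hab => hf2 a b hab ha
    · exact fun a b hab => hf3 a b hab
    · exact fun a b ha hb => hf4 a b ha hb
  obtain ⟨Δ, hΔ, hsubΔ⟩ := exists_cluster hΓ₀
  have hmem : (⟨Δ, hΔ⟩ : ClSp E) ∈ univ ∩ ⋂ i, Z i := by
    refine ⟨mem_univ _, mem_iInter.2 fun i => ?_⟩
    rw [hA i]; refine mem_iInter₂.2 ?_
    intro d hd
    have hdB : d ∈ B := mem_iUnion.2 ⟨i, hd⟩
    have hfd : f d = true := by
      have := mem_iInter.1 hfB ⟨d, hdB⟩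
      simpa using this
    exact hsubΔ hfd
  rw [hZe] at hmem
  exact hmem

theorem sep_clusters
    (hNor1 : ∀ a b : D, ¬ E.C a b → ∃ c d : D, c ⊔ d = ⊤ ∧ ¬ E.C a c ∧ ¬ E.C b d)
    {Γ Δ : ClSp E} {a : D} (haΓ : a ∈ Γ.1) (haΔ : a ∉ Δ.1) :
    ∃ U V : Set (ClSp E), IsOpen U ∧ IsOpen V ∧ Γ ∈ U ∧ Δ ∈ V ∧ Disjoint U V := by
  have h1 : ¬ ∀ y ∈ Δ.1, E.C a y := fun h => haΔ (cluster_mem hNor1 Δ.2 h)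
  push_neg at h1
  obtain ⟨y, hyΔ, hay⟩ := h1
  obtain ⟨c, d, hcd, hac, hyd⟩ := hNor1 a y hay
  have hcΓ : Γ ∈ (hh E c)ᶜ := fun h => hac (Γ.2.1.2.2.2 a c haΓ h)
  have hdΔ : Δ ∈ (hh E d)ᶜ := fun h => hyd (Δ.2.1.2.2.2 y d hyΔ h)
  refine ⟨(hh E c)ᶜ, (hh E d)ᶜ, (isClosed_hh E c).isOpen_compl,
    (isClosed_hh E d).isOpen_compl, hcΓ, hdΔ, ?_⟩
  rw [Set.disjoint_iff_inter_eq_empty, ← compl_union, ← hh_sup, hcd, hh_top, compl_univ]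

theorem t2space
    (hNor1 : ∀ a b : D, ¬ E.C a b → ∃ c d : D, c ⊔ d = ⊤ ∧ ¬ E.C a c ∧ ¬ E.C b d) :
    T2Space (ClSp E) := by
  constructor
  intro Γ Δ hne
  have h1 : Γ.1 ≠ Δ.1 := fun h => hne (Subtype.ext h)
  have hex : ∃ a, (a ∈ Γ.1 ∧ a ∉ Δ.1) ∨ (a ∈ Δ.1 ∧ a ∉ Γ.1) := by
    by_contra hcon
    push_neg at hcon
    exact h1 (Set.ext fun a => ⟨fun h => (hcon a).1 h, fun h => (hcon a).2 h⟩)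
  obtain ⟨a, h | h⟩ := hex
  · exact sep_clusters hNor1 h.1 h.2
  · obtain ⟨U, V, hU, hV, hΔU, hΓV, hdisj⟩ := sep_clusters hNor1 h.1 h.2
    exact ⟨V, U, hV, hU, hΓV, hΔU, hdisj.symm⟩

theorem ll_rep (hExtO : ∀ a b : D, ¬ a ≤ b → ∃ c : D, a ⊔ c = ⊤ ∧ b ⊔ c ≠ ⊤)
    (hExtC : ∀ a : D, a ≠ ⊤ → ∃ b : D, b ≠ ⊥ ∧ ¬ E.C a b)
    (hUll : ∀ a b : D, E.Ll a b → ∃ c : D, b ⊔ c = ⊤ ∧ ¬ E.C a c)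
    (a b : D) : E.Ll a b ↔ hh E a ⊆ interior (hh E b) := by
  constructor
  · intro h
    obtain ⟨c, hbc, hac⟩ := hUll a b h
    have hdisj : hh E a ∩ hh E c = ∅ := not_ne_iff.1 fun h' => hac ((contact_iff a c).2 h')
    have h1 : hh E a ⊆ (hh E c)ᶜ := fun Γ hΓ hc =>
      (eq_empty_iff_forall_notMem.1 hdisj Γ) ⟨hΓ, hc⟩
    exact h1.trans (compl_subset_interior E hbc)
  · intro h
    haveI := compactSpace (E := E)
    have hcomp : IsCompact (hh E a) := (isClosed_hh E a).isCompact
    have hcov : hh E a ⊆ ⋃ (i : {c : D // b ⊔ c = ⊤}), (hh E i.1)ᶜ := by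
      intro Γ hΓ
      have h2 := h hΓ
      rw [interior_hh hExtO hExtC] at h2
      obtain ⟨c, hc, hmem⟩ := mem_iUnion₂.1 h2
      exact mem_iUnion.2 ⟨⟨c, hc⟩, hmem⟩
    obtain ⟨t, ht⟩ := hcomp.elim_finite_subcover
      (fun i : {c : D // b ⊔ c = ⊤} => (hh E i.1)ᶜ)
      (fun i => (isClosed_hh E i.1).isOpen_compl) hcov
    have hbc₀ : b ⊔ t.inf (fun i => i.1) = ⊤ := by
      rw [Finset.inf_sup_distrib_left]
      exact top_unique (Finset.le_inf fun (i : {c : D // b ⊔ c = ⊤}) _ => i.2.ge)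
    have hnc : ¬ E.C a (t.inf (fun i => i.1)) := by
      rw [contact_iff, not_ne_iff]
      apply eq_empty_iff_forall_notMem.2
      rintro Γ ⟨hΓa, hΓc⟩
      obtain ⟨i, hi, hmem⟩ := mem_iUnion₂.1 (ht hΓa)
      exact hmem (hh_mono E (Finset.inf_le hi) hΓc)
    exact ll_of hbc₀ hnc

theorem cd_rep (hExtO : ∀ a b : D, ¬ a ≤ b → ∃ c : D, a ⊔ c = ⊤ ∧ b ⊔ c ≠ ⊤)
    (hExtC : ∀ a : D, a ≠ ⊤ → ∃ b : D, b ≠ ⊥ ∧ ¬ E.C a b)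
    (hUcd : ∀ a b : D, ¬ E.Cd a b → ∃ c d : D, a ⊔ c = ⊤ ∧ b ⊔ d = ⊤ ∧ ¬ E.C c d)
    (a b : D) : E.Cd a b ↔ interior (hh E a) ∪ interior (hh E b) ≠ univ := by
  constructor
  · intro hcd hcontra
    haveI := compactSpace (E := E)
    have hUopen : ∀ i : {c : D // a ⊔ c = ⊤} ⊕ {d : D // b ⊔ d = ⊤},
        IsOpen (Sum.elim (fun c : {c : D // a ⊔ c = ⊤} => (hh E c.1)ᶜ)
          (fun d : {d : D // b ⊔ d = ⊤} => (hh E d.1)ᶜ) i) := by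
      rintro (c | d) <;> exact (isClosed_hh E _).isOpen_compl
    have hcov : univ ⊆ ⋃ i, Sum.elim (fun c : {c : D // a ⊔ c = ⊤} => (hh E c.1)ᶜ)
        (fun d : {d : D // b ⊔ d = ⊤} => (hh E d.1)ᶜ) i := by
      intro Γ _
      have h2 : Γ ∈ interior (hh E a) ∪ interior (hh E b) := by
        rw [hcontra]; exact mem_univ Γ
      rcases h2 with h2 | h2
      · rw [interior_hh hExtO hExtC] at h2
        obtain ⟨c, hc, hmem⟩ := mem_iUnion₂.1 h2
        exact mem_iUnion.2 ⟨Sum.inl ⟨c, hc⟩, hmem⟩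
      · rw [interior_hh hExtO hExtC] at h2
        obtain ⟨d, hd, hmem⟩ := mem_iUnion₂.1 h2
        exact mem_iUnion.2 ⟨Sum.inr ⟨d, hd⟩, hmem⟩
    obtain ⟨t, ht⟩ := isCompact_univ.elim_finite_subcover _ hUopen hcov
    have hac₀ : a ⊔ t.inf (fun i => Sum.elim (fun c => c.1) (fun _ => (⊤ : D)) i) = ⊤ := by
      rw [Finset.inf_sup_distrib_left]
      refine top_unique (Finset.le_inf ?_)
      rintro (c | d) -
      · exact c.2.ge
      · simp
    have hbd₀ : b ⊔ t.inf (fun i => Sum.elim (fun _ => (⊤ : D)) (fun d => d.1) i) = ⊤ := by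
      rw [Finset.inf_sup_distrib_left]
      refine top_unique (Finset.le_inf ?_)
      rintro (c | d) -
      · simp
      · exact d.2.ge
    have hC₀ : E.C _ _ := contact_of_cd hcd hac₀ hbd₀
    rw [contact_iff] at hC₀
    apply hC₀
    apply eq_empty_iff_forall_notMem.2
    rintro Γ ⟨h1, h2⟩
    obtain ⟨i, hi, hmem⟩ := mem_iUnion₂.1 (ht (mem_univ Γ))
    rcases i with c | d
    · exact hmem (hh_mono E (Finset.inf_le hi) h1)
    · exact hmem (hh_mono E (Finset.inf_le hi) h2)
  · intro hne
    by_contra hncd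
    obtain ⟨c, d, hac, hbd, hncd'⟩ := hUcd a b hncd
    apply hne
    have hdisj : hh E c ∩ hh E d = ∅ := not_ne_iff.1 fun h' => hncd' ((contact_iff c d).2 h')
    apply eq_univ_of_forall
    intro Γ
    by_cases h : Γ ∈ hh E c
    · have hnd : Γ ∈ (hh E d)ᶜ := fun hd' => (eq_empty_iff_forall_notMem.1 hdisj Γ) ⟨h, hd'⟩
      exact Or.inr (compl_subset_interior E hbd hnd)
    · exact Or.inl (compl_subset_interior E hac h)

theorem density (hExtO : ∀ a b : D, ¬ a ≤ b → ∃ c : D, a ⊔ c = ⊤ ∧ b ⊔ c ≠ ⊤)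
    (α : Set (ClSp E)) (hreg : closure (interior α) = α) (hne : α ≠ univ) :
    ∃ a : D, α ⊆ hh E a ∧ hh E a ≠ univ := by
  have hcl : IsClosed α := hreg ▸ isClosed_closure
  obtain ⟨Γ, hΓ⟩ := nonempty_compl.2 hne
  obtain ⟨a, haΓ, hsub⟩ := basic_nbhd E hcl.isOpen_compl hΓ
  refine ⟨a, ?_, ?_⟩
  · intro Δ hΔ
    by_contra hna
    exact (hsub hna) hΔ
  · intro h
    apply haΓ
    have : Γ ∈ hh E a := by rw [h]; trivial
    exact this

end EDCRep

/-- topological representation theorem in compact Hausdorff spaces for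
U-rich EDC-lattices satisfying (Ext C) and (Nor 1). -/
theorem stmt18 {D : Type u} [DistribLattice D] [BoundedOrder D] (E : EDC D)
    (hExtO : ∀ a b : D, ¬ a ≤ b → ∃ c : D, a ⊔ c = ⊤ ∧ b ⊔ c ≠ ⊤)
    (hUll : ∀ a b : D, E.Ll a b → ∃ c : D, b ⊔ c = ⊤ ∧ ¬ E.C a c)
    (hUcd : ∀ a b : D, ¬ E.Cd a b → ∃ c d : D, a ⊔ c = ⊤ ∧ b ⊔ d = ⊤ ∧ ¬ E.C c d)
    (hExtC : ∀ a : D, a ≠ ⊤ → ∃ b : D, b ≠ ⊥ ∧ ¬ E.C a b)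
    (hNor1 : ∀ a b : D, ¬ E.C a b → ∃ c d : D, c ⊔ d = ⊤ ∧ ¬ E.C a c ∧ ¬ E.C b d) :
    ∃ (X : Type u) (_ : TopologicalSpace X) (h : D → Set X),
      CompactSpace X ∧ T2Space X ∧
      (∀ a : D, closure (interior (h a)) = h a) ∧
      Function.Injective h ∧
      h ⊥ = ∅ ∧ h ⊤ = Set.univ ∧
      (∀ a b : D, h (a ⊔ b) = h a ∪ h b) ∧
      (∀ a b : D, h (a ⊓ b) = closure (interior (h a ∩ h b))) ∧
      (∀ a b : D, a ≤ b ↔ h a ⊆ h b) ∧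
      (∀ a b : D, E.C a b ↔ h a ∩ h b ≠ ∅) ∧
      (∀ a b : D, E.Cd a b ↔ interior (h a) ∪ interior (h b) ≠ Set.univ) ∧
      (∀ a b : D, E.Ll a b ↔ h a ⊆ interior (h b)) ∧
      (∀ α : Set X, closure (interior α) = α → α ≠ Set.univ →
        ∃ a : D, α ⊆ h a ∧ h a ≠ Set.univ) := by
  classical
  refine ⟨EDCRep.ClSp E, inferInstance, EDCRep.hh E,
    EDCRep.compactSpace, EDCRep.t2space hNor1,
    EDCRep.hh_regclosed hExtO hExtC,
    ?_,
    EDCRep.hh_bot E, EDCRep.hh_top E, EDCRep.hh_sup E,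
    EDCRep.hh_inf hExtO hExtC,
    EDCRep.hh_le hExtO hExtC,
    EDCRep.contact_iff,
    EDCRep.cd_rep hExtO hExtC hUcd,
    EDCRep.ll_rep hExtO hExtC hUll,
    EDCRep.density hExtO⟩
  intro a b hab
  exact le_antisymm ((EDCRep.hh_le hExtO hExtC a b).2 hab.subset)
    ((EDCRep.hh_le hExtO hExtC b a).2 hab.symm.subset)
end

section
/- In an EDC-lattice D, every co-cluster is a minimal E-filter, i.e., if Γ is a co-cluster then there is no E-filter Δ with Δ ⊊ Γ. -/
universe u

/-- An E-filter of an EDC-lattice: a proper filter `Γ` such that `a ∉ Γ` and `b ∉ Γ`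
imply `a Ĉ b`. -/
def IsEFilter {D : Type u} [DistribLattice D] [BoundedOrder D] (E : EDC D) (Γ : Set D) : Prop :=
  EDCFilter Γ ∧ ⊥ ∉ Γ ∧ ∀ a b : D, a ∉ Γ → b ∉ Γ → E.Cd a b

/-- A co-cluster: an E-filter `Γ` such that whenever `a Ĉ b` for all `b ∉ Γ`, then `a ∉ Γ`. -/
def IsCoCluster {D : Type u} [DistribLattice D] [BoundedOrder D] (E : EDC D) (Γ : Set D) : Prop :=
  IsEFilter E Γ ∧ ∀ a : D, (∀ b ∉ Γ, E.Cd a b) → a ∉ Γ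

/-- every co-cluster is a minimal E-filter. -/
theorem stmt19 {D : Type u} [DistribLattice D] [BoundedOrder D] (E : EDC D)
    (Γ : Set D) (hΓ : IsCoCluster E Γ) :
    ¬ ∃ Δ : Set D, IsEFilter E Δ ∧ Δ ⊂ Γ := by
  rintro ⟨Δ, hΔ, hsub⟩
  obtain ⟨a, haΓ, haΔ⟩ := Set.exists_of_ssubset hsub
  have h : ¬ ∀ b ∉ Γ, E.Cd a b := fun h => hΓ.2 a h haΓ
  push_neg at h
  obtain ⟨b, hbΓ, hcd⟩ := h
  exact hcd (hΔ.2.2 a b haΔ (fun hb => hbΓ (hsub.1 hb)))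
end
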